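/- arXiv:2402.06338 — 10 statements merged into one kernel-verified Lean document; each statement's English description precedes it below -/
import Mathlib

section
/- For every integer k ≥ 1, every finite simple graph with at least one vertex whose average degree is at least 4k (i.e., 2|E(G)| ≥ 4k·|V(G)|) contains a (k+1)-connected subgraph. -/
/-- A graph is `k`-connected if it has at least `k+1` vertices and deleting any set of
at most `k-1` vertices leaves a connected (in particular nonempty) graph. -/
def SimpleGraph.IsKConnected {V : Type*} (G : SimpleGraph V) (k : ℕ) : Prop :=
  k + 1 ≤ Nat.card V ∧ ∀ S : Set V, S.ncard ≤ k - 1 → (G.induce Sᶜ).Connected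

/-- A graph is fragile if it has no 3-connected subgraph. -/
def SimpleGraph.Fragile {V : Type*} (G : SimpleGraph V) : Prop :=
  ∀ H : G.Subgraph, ¬ H.coe.IsKConnected 3

/-- A graph is `m`-fragile if every 3-connected subgraph of it is `(m-1)`-colourable. -/
def SimpleGraph.MFragile {V : Type*} (m : ℕ) (G : SimpleGraph V) : Prop :=
  ∀ H : G.Subgraph, H.coe.IsKConnected 3 → H.coe.Colorable (m - 1)

section MaderAux
open Finset
variable {V : Type*} [Fintype V] [DecidableEq V] (G : SimpleGraph V) [DecidableRel G.Adj]

private def ES (t : Finset V) : Finset (Sym2 V) :=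
  G.edgeFinset.filter (· ∈ t.sym2)

private lemma mem_ES {t : Finset V} {e : Sym2 V} :
    e ∈ ES G t ↔ e ∈ G.edgeSet ∧ ∀ v ∈ e, v ∈ t := by
  simp [ES, Finset.mem_filter, Finset.mem_sym2_iff, SimpleGraph.mem_edgeFinset]

private lemma ES_univ : ES G Finset.univ = G.edgeFinset := by
  ext e; simp [mem_ES, SimpleGraph.mem_edgeFinset]

private lemma ES_eq_image (t : Finset V) :
    ES G t = (G.induce (↑t : Set V)).edgeFinset.image (Sym2.map Subtype.val) := by
  ext e
  constructor
  · intro he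
    rw [mem_ES] at he
    obtain ⟨he1, he2⟩ := he
    induction e with
    | _ a b =>
      rw [SimpleGraph.mem_edgeSet] at he1
      have ha : a ∈ t := he2 a (Sym2.mem_mk_left _ _)
      have hb : b ∈ t := he2 b (Sym2.mem_mk_right _ _)
      refine Finset.mem_image.mpr ⟨s(⟨a, ha⟩, ⟨b, hb⟩), ?_, rfl⟩
      rw [SimpleGraph.mem_edgeFinset, SimpleGraph.mem_edgeSet]
      exact he1
  · intro he
    obtain ⟨e', he', rfl⟩ := Finset.mem_image.mp he
    rw [mem_ES]
    induction e' with
    | _ u v =>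
      rw [SimpleGraph.mem_edgeFinset, SimpleGraph.mem_edgeSet] at he'
      refine ⟨he', ?_⟩
      rintro w hw
      rcases Sym2.mem_iff.mp hw with rfl | rfl
      · exact u.2
      · exact v.2

private lemma two_mul_card_ES_le (t : Finset V) :
    2 * (ES G t).card ≤ t.card * (t.card - 1) := by
  have h1 : (ES G t).card = (G.induce (↑t : Set V)).edgeFinset.card := by
    rw [ES_eq_image]
    exact Finset.card_image_of_injective _ (Sym2.map.injective Subtype.val_injective)
  have h2 := SimpleGraph.card_edgeFinset_le_card_choose_two (G := G.induce (↑t : Set V))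
  have h3 : Fintype.card ↥(↑t : Set V) = t.card := by
    rw [← Nat.card_eq_fintype_card, Nat.card_coe_set_eq, Set.ncard_coe_finset]
  rw [h3, Nat.choose_two_right] at h2
  calc 2 * (ES G t).card ≤ 2 * (t.card * (t.card - 1) / 2) := by omega
    _ ≤ t.card * (t.card - 1) := by omega

private lemma ES_erase (t : Finset V) (v : V) :
    (ES G t).card ≤ (ES G (t.erase v)).card + (t.filter (G.Adj v)).card := by
  have hsub : ES G t ⊆ ES G (t.erase v) ∪ (t.filter (G.Adj v)).image (fun w => s(v, w)) := by
    intro e he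
    rw [mem_ES] at he
    obtain ⟨he1, he2⟩ := he
    rw [Finset.mem_union]
    by_cases hv : v ∈ e
    · right
      induction e with
      | _ a b =>
        rw [SimpleGraph.mem_edgeSet] at he1
        rcases Sym2.mem_iff.mp hv with rfl | rfl
        · exact Finset.mem_image.mpr ⟨b, Finset.mem_filter.mpr
            ⟨he2 b (Sym2.mem_mk_right _ _), he1⟩, rfl⟩
        · refine Finset.mem_image.mpr ⟨a, Finset.mem_filter.mpr
            ⟨he2 a (Sym2.mem_mk_left _ _), he1.symm⟩, ?_⟩
          exact Sym2.eq_swap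
    · left
      rw [mem_ES]
      exact ⟨he1, fun w hw => Finset.mem_erase.mpr
        ⟨fun h => hv (h ▸ hw), he2 w hw⟩⟩
  calc (ES G t).card ≤ _ := Finset.card_le_card hsub
    _ ≤ (ES G (t.erase v)).card + ((t.filter (G.Adj v)).image (fun w => s(v, w))).card :=
        Finset.card_union_le _ _
    _ ≤ _ := by gcongr; exact Finset.card_image_le

private lemma ES_sep {t a b : Finset V} (hab : t ⊆ a ∪ b)
    (h : ∀ x y, x ∈ a → x ∉ b → y ∈ b → y ∉ a → ¬ G.Adj x y) :
    (ES G t).card ≤ (ES G a).card + (ES G b).card := by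
  have hsub : ES G t ⊆ ES G a ∪ ES G b := by
    intro e he
    rw [mem_ES] at he
    obtain ⟨he1, he2⟩ := he
    induction e with
    | _ x y =>
      rw [SimpleGraph.mem_edgeSet] at he1
      have hx := Finset.mem_union.mp (hab (he2 x (Sym2.mem_mk_left _ _)))
      have hy := Finset.mem_union.mp (hab (he2 y (Sym2.mem_mk_right _ _)))
      rw [Finset.mem_union, mem_ES, mem_ES]
      by_cases hxa : x ∈ a
      · by_cases hya : y ∈ a
        · left; exact ⟨he1, by intro w hw; rcases Sym2.mem_iff.mp hw with rfl | rfl <;> assumption⟩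
        · have hyb : y ∈ b := hy.resolve_left hya
          by_cases hxb : x ∈ b
          · right; exact ⟨he1, by intro w hw; rcases Sym2.mem_iff.mp hw with rfl | rfl <;> assumption⟩
          · exact absurd he1 (h x y hxa hxb hyb hya)
      · have hxb : x ∈ b := hx.resolve_left hxa
        by_cases hyb : y ∈ b
        · right; exact ⟨he1, by intro w hw; rcases Sym2.mem_iff.mp hw with rfl | rfl <;> assumption⟩
        · have hya : y ∈ a := hy.resolve_right hyb
          exact absurd he1.symm (h y x hya hyb hxb hxa)
  calc (ES G t).card ≤ _ := Finset.card_le_card hsub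
    _ ≤ _ := Finset.card_union_le _ _

end MaderAux

set_option maxHeartbeats 2000000 in
/-- Mader 1972: every nonempty graph with average degree at least `4k`
contains a `(k+1)`-connected subgraph. -/
theorem statement0 {V : Type*} [Fintype V] (G : SimpleGraph V) [DecidableRel G.Adj]
    (k : ℕ) (hk : 1 ≤ k) (hV : Nonempty V)
    (hdeg : 4 * k * Fintype.card V ≤ 2 * G.edgeFinset.card) :
    ∃ H : G.Subgraph, H.coe.IsKConnected (k + 1) := by
  classical
  set n := Fintype.card V with hn
  set P : Finset V → Prop := fun t =>
    2 * k ≤ t.card ∧ (2 * k : ℤ) * ((t.card : ℤ) - k) < (ES G t).card with hPdef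
  have hk' : (1 : ℤ) ≤ (k : ℤ) := by exact_mod_cast hk
  have hm2 : 2 * G.edgeFinset.card ≤ n * (n - 1) := by
    have := two_mul_card_ES_le G (Finset.univ (α := V))
    rwa [ES_univ, Finset.card_univ] at this
  have hn1 : 1 ≤ n := Fintype.card_pos
  have hn4k : 4 * k + 1 ≤ n := by
    have h1 : 4 * k * n ≤ (n - 1) * n := by
      calc 4 * k * n ≤ 2 * G.edgeFinset.card := hdeg
        _ ≤ n * (n - 1) := hm2
        _ = (n - 1) * n := Nat.mul_comm _ _
    have := Nat.le_of_mul_le_mul_right h1 (by omega : 0 < n)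
    omega
  have hPuniv : P Finset.univ := by
    rw [hPdef]
    refine ⟨by rw [Finset.card_univ]; omega, ?_⟩
    rw [ES_univ, Finset.card_univ]
    have hdeg' : (4 * k * n : ℤ) ≤ 2 * (G.edgeFinset.card : ℤ) := by exact_mod_cast hdeg
    nlinarith [hdeg', hk']
  obtain ⟨t, hPt, hmin⟩ : ∃ t, P t ∧ ∀ t', P t' → t.card ≤ t'.card := by
    obtain ⟨t, ht, hm⟩ := Finset.exists_min_image (Finset.univ.filter P) Finset.card
      ⟨Finset.univ, Finset.mem_filter.mpr ⟨Finset.mem_univ _, hPuniv⟩⟩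
    exact ⟨t, (Finset.mem_filter.mp ht).2,
      fun t' h' => hm t' (Finset.mem_filter.mpr ⟨Finset.mem_univ _, h'⟩)⟩
  obtain ⟨ht2k, htE⟩ := hPt
  -- the minimum has more than 2k vertices
  have htcard : 2 * k + 1 ≤ t.card := by
    by_contra hcon
    have hteq : (t.card : ℤ) = 2 * k := by
      have : t.card = 2 * k := by omega
      exact_mod_cast this
    have h2 : (2 : ℤ) * ((ES G t).card : ℤ) ≤ (t.card : ℤ) * ((t.card : ℤ) - 1) := by
      have h := two_mul_card_ES_le G t
      have h1 : 1 ≤ t.card := by omega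
      zify [h1] at h
      exact h
    rw [hteq] at htE h2
    nlinarith [htE, h2, hk']
  -- minimum degree within t is at least 2k+1
  have hmindeg : ∀ v ∈ t, 2 * k + 1 ≤ (t.filter (G.Adj v)).card := by
    intro v hv
    by_contra hcon
    push_neg at hcon
    have hPer : P (t.erase v) := by
      rw [hPdef]
      constructor
      · rw [Finset.card_erase_of_mem hv]; omega
      · have h1 := ES_erase G t v
        rw [Finset.card_erase_of_mem hv]
        have hc : ((t.card - 1 : ℕ) : ℤ) = (t.card : ℤ) - 1 := by
          have h1' : 1 ≤ t.card := by omega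
          omega
        rw [hc]
        have h1' : ((ES G t).card : ℤ) ≤
            ((ES G (t.erase v)).card : ℤ) + ((t.filter (G.Adj v)).card : ℤ) := by
          exact_mod_cast h1
        have h2' : ((t.filter (G.Adj v)).card : ℤ) ≤ 2 * k := by
          have : (t.filter (G.Adj v)).card ≤ 2 * k := by omega
          exact_mod_cast this
        nlinarith [htE, h1', h2']
    have := hmin _ hPer
    rw [Finset.card_erase_of_mem hv] at this
    omega
  -- build the subgraph
  set H : G.Subgraph :=
    { verts := (↑t : Set V)
      Adj := fun a b => G.Adj a b ∧ a ∈ t ∧ b ∈ t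
      adj_sub := fun h => h.1
      edge_vert := fun h => h.2.1
      symm := ⟨fun a b h => ⟨h.1.symm, h.2.2, h.2.1⟩⟩ } with hHdef
  have hvert_mem : ∀ u : ↥H.verts, (↑u : V) ∈ t := fun u => u.2
  have hcard_t : Nat.card ↥H.verts = t.card := by
    rw [hHdef]
    rw [Nat.card_coe_set_eq, Set.ncard_coe_finset]
  refine ⟨H, ?_, ?_⟩
  · rw [hcard_t]; omega
  intro S hS
  have hScard : S.ncard ≤ k := by simpa using hS
  have hSfin : S.Finite := Set.toFinite S
  set Sv : Finset V :=
    t.filter (fun z => ∃ h : z ∈ H.verts, (⟨z, h⟩ : ↥H.verts) ∈ S) with hSvdef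
  have hSv_iff : ∀ u : ↥H.verts, (↑u : V) ∈ Sv ↔ u ∈ S := by
    intro u
    rw [hSvdef, Finset.mem_filter]
    constructor
    · rintro ⟨-, h, hu⟩
      exact hu
    · intro hu
      exact ⟨hvert_mem u, u.2, hu⟩
  have hSvcard : Sv.card ≤ k := by
    have hsub : Sv ⊆ hSfin.toFinset.image (fun u => u.1) := by
      intro z hz
      rw [hSvdef, Finset.mem_filter] at hz
      obtain ⟨-, h, hzS⟩ := hz
      exact Finset.mem_image.mpr ⟨⟨z, h⟩, hSfin.mem_toFinset.mpr hzS, rfl⟩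
    calc Sv.card ≤ _ := Finset.card_le_card hsub
      _ ≤ hSfin.toFinset.card := Finset.card_image_le
      _ = S.ncard := (Set.ncard_eq_toFinset_card _ hSfin).symm
      _ ≤ k := hScard
  have hne : Sᶜ.Nonempty := by
    refine Set.nonempty_compl.mpr ?_
    intro h
    rw [h, Set.ncard_univ, hcard_t] at hScard
    omega
  rw [SimpleGraph.connected_iff]
  refine ⟨?_, Set.nonempty_coe_sort.mpr hne⟩
  intro x y
  by_contra hxy
  -- adjacency in the doubly-induced graph
  have hadj : ∀ u w : ↥Sᶜ, (H.coe.induce Sᶜ).Adj u w ↔ G.Adj ↑↑u ↑↑w := by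
    intro u w
    constructor
    · intro h; exact h.1
    · intro h; exact ⟨h, hvert_mem ↑u, hvert_mem ↑w⟩
  set Av : Finset V := t.filter (fun z => ∃ (h1 : z ∈ H.verts)
      (h2 : (⟨z, h1⟩ : ↥H.verts) ∈ Sᶜ),
      (H.coe.induce Sᶜ).Reachable x ⟨⟨z, h1⟩, h2⟩) with hAvdef
  have hAv_iff : ∀ w : ↥Sᶜ, (↑↑w : V) ∈ Av ↔ (H.coe.induce Sᶜ).Reachable x w := by
    intro w
    rw [hAvdef, Finset.mem_filter]
    constructor
    · rintro ⟨-, h1, h2, hr⟩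
      exact hr
    · intro hr
      exact ⟨hvert_mem ↑w, (↑w : ↥H.verts).2, w.2, hr⟩
  have hx_mem : (↑↑x : V) ∈ Av := (hAv_iff x).mpr (SimpleGraph.Reachable.refl x)
  have hy_not : (↑↑y : V) ∉ Av := fun h => hxy ((hAv_iff y).mp h)
  have hAv_sub : Av ⊆ t := Finset.filter_subset _ _
  have hAv_Sv : ∀ z ∈ Av, z ∉ Sv := by
    intro z hz hzS
    rw [hAvdef, Finset.mem_filter] at hz
    obtain ⟨-, h1, h2, -⟩ := hz
    exact h2 ((hSv_iff ⟨z, h1⟩).mp hzS)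
  have hclose : ∀ z ∈ Av, ∀ w ∈ t, w ∉ Sv → G.Adj z w → w ∈ Av := by
    intro z hz w hwt hwS hadj'
    rw [hAvdef, Finset.mem_filter] at hz ⊢
    obtain ⟨hzt, h1, h2, hr⟩ := hz
    have hw1 : w ∈ H.verts := hwt
    have hw2 : (⟨w, hw1⟩ : ↥H.verts) ∈ Sᶜ := fun hmem => hwS ((hSv_iff ⟨w, hw1⟩).mpr hmem)
    refine ⟨hwt, hw1, hw2, ?_⟩
    exact hr.trans ((hadj ⟨⟨z, h1⟩, h2⟩ ⟨⟨w, hw1⟩, hw2⟩).mpr hadj').reachable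
  have hxSv : (↑↑x : V) ∉ Sv := fun h => x.2 ((hSv_iff ↑x).mp h)
  have hySv : (↑↑y : V) ∉ Sv := fun h => y.2 ((hSv_iff ↑y).mp h)
  have hnbry : ∀ w ∈ t, G.Adj ↑↑y w → w ∉ Av := by
    intro w hwt hadj' hwAv
    exact hy_not (hclose w hwAv ↑↑y (hvert_mem ↑y) hySv hadj'.symm)
  set Fa : Finset V := Av ∪ (t ∩ Sv) with hFadef
  set Fb : Finset V := t \ Av with hFbdef
  have hFa_sub : Fa ⊆ t := Finset.union_subset hAv_sub Finset.inter_subset_left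
  have hFb_sub : Fb ⊆ t := Finset.sdiff_subset
  have htab : t ⊆ Fa ∪ Fb := by
    intro z hz
    by_cases hzA : z ∈ Av
    · exact Finset.mem_union.mpr (Or.inl (Finset.mem_union.mpr (Or.inl hzA)))
    · exact Finset.mem_union.mpr (Or.inr (Finset.mem_sdiff.mpr ⟨hz, hzA⟩))
  have hsep : ∀ u w, u ∈ Fa → u ∉ Fb → w ∈ Fb → w ∉ Fa → ¬ G.Adj u w := by
    intro u w hu hunb hw hwna hadj'
    have huAv : u ∈ Av := by
      rcases Finset.mem_union.mp hu with h | h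
      · exact h
      · obtain ⟨hut, huS⟩ := Finset.mem_inter.mp h
        exact absurd (Finset.mem_sdiff.mpr ⟨hut, fun hA => hAv_Sv u hA huS⟩) hunb
    obtain ⟨hwt, hwAv⟩ := Finset.mem_sdiff.mp hw
    have hwSv : w ∉ Sv := fun h =>
      hwna (Finset.mem_union.mpr (Or.inr (Finset.mem_inter.mpr ⟨hwt, h⟩)))
    exact hwAv (hclose u huAv w hwt hwSv hadj')
  -- size bounds
  have hdx := hmindeg ↑↑x (hvert_mem ↑x)
  have hdy := hmindeg ↑↑y (hvert_mem ↑y)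
  have hFa_big : 2 * k + 2 ≤ Fa.card := by
    have hsub : insert (↑↑x : V) (t.filter (G.Adj ↑↑x)) ⊆ Fa := by
      intro w hw
      rcases Finset.mem_insert.mp hw with rfl | hw
      · exact Finset.mem_union.mpr (Or.inl hx_mem)
      · obtain ⟨hwt, hwadj⟩ := Finset.mem_filter.mp hw
        by_cases hwS : w ∈ Sv
        · exact Finset.mem_union.mpr (Or.inr (Finset.mem_inter.mpr ⟨hwt, hwS⟩))
        · exact Finset.mem_union.mpr (Or.inl (hclose _ hx_mem w hwt hwS hwadj))
    have hxnotin : (↑↑x : V) ∉ t.filter (G.Adj ↑↑x) := by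
      simp [Finset.mem_filter]
    calc 2 * k + 2 ≤ (t.filter (G.Adj ↑↑x)).card + 1 := by omega
      _ = (insert (↑↑x : V) (t.filter (G.Adj ↑↑x))).card :=
          (Finset.card_insert_of_notMem hxnotin).symm
      _ ≤ Fa.card := Finset.card_le_card hsub
  have hFb_big : 2 * k + 2 ≤ Fb.card := by
    have hsub : insert (↑↑y : V) (t.filter (G.Adj ↑↑y)) ⊆ Fb := by
      intro w hw
      rcases Finset.mem_insert.mp hw with rfl | hw
      · exact Finset.mem_sdiff.mpr ⟨hvert_mem ↑y, hy_not⟩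
      · obtain ⟨hwt, hwadj⟩ := Finset.mem_filter.mp hw
        exact Finset.mem_sdiff.mpr ⟨hwt, hnbry w hwt hwadj⟩
    have hynotin : (↑↑y : V) ∉ t.filter (G.Adj ↑↑y) := by
      simp [Finset.mem_filter]
    calc 2 * k + 2 ≤ (t.filter (G.Adj ↑↑y)).card + 1 := by omega
      _ = (insert (↑↑y : V) (t.filter (G.Adj ↑↑y))).card :=
          (Finset.card_insert_of_notMem hynotin).symm
      _ ≤ Fb.card := Finset.card_le_card hsub
  have hy_notFa : (↑↑y : V) ∉ Fa := by
    intro h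
    rcases Finset.mem_union.mp h with h | h
    · exact hy_not h
    · exact hySv (Finset.mem_inter.mp h).2
  have hFa_lt : Fa.card < t.card :=
    Finset.card_lt_card ((Finset.ssubset_iff_of_subset hFa_sub).mpr
      ⟨↑↑y, hvert_mem ↑y, hy_notFa⟩)
  have hFb_lt : Fb.card < t.card :=
    Finset.card_lt_card ((Finset.ssubset_iff_of_subset hFb_sub).mpr
      ⟨↑↑x, hvert_mem ↑x, fun h => (Finset.mem_sdiff.mp h).2 hx_mem⟩)
  have hAvle : Av.card ≤ t.card := Finset.card_le_card hAv_sub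
  have hcardsum : Fa.card + Fb.card ≤ t.card + k := by
    have h1 : Fa.card ≤ Av.card + k := by
      calc Fa.card ≤ Av.card + (t ∩ Sv).card := Finset.card_union_le _ _
        _ ≤ Av.card + Sv.card :=
            Nat.add_le_add_left (Finset.card_le_card Finset.inter_subset_right) _
        _ ≤ Av.card + k := by omega
    have h2 : Fb.card = t.card - Av.card := Finset.card_sdiff_of_subset hAv_sub
    omega
  have hnPa : ¬ P Fa := fun hP => absurd (hmin _ hP) (by omega)
  have hnPb : ¬ P Fb := fun hP => absurd (hmin _ hP) (by omega)
  have hEa : ((ES G Fa).card : ℤ) ≤ 2 * k * ((Fa.card : ℤ) - k) := by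
    by_contra hcon
    push_neg at hcon
    exact hnPa ⟨by omega, hcon⟩
  have hEb : ((ES G Fb).card : ℤ) ≤ 2 * k * ((Fb.card : ℤ) - k) := by
    by_contra hcon
    push_neg at hcon
    exact hnPb ⟨by omega, hcon⟩
  have hEt : ((ES G t).card : ℤ) ≤ ((ES G Fa).card : ℤ) + ((ES G Fb).card : ℤ) := by
    exact_mod_cast ES_sep G htab hsep
  have hcast : ((Fa.card : ℤ) + (Fb.card : ℤ) ≤ (t.card : ℤ) + k) := by exact_mod_cast hcardsum
  have hprod := mul_le_mul_of_nonneg_left hcast (by positivity : (0 : ℤ) ≤ 2 * k)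
  nlinarith [htE, hEa, hEb, hEt, hprod]
end

section
/- Every fragile finite simple graph G on at least 4 vertices satisfies 2·|E(G)| ≤ 5·|V(G)| − 10. -/
open Finset

section Aux

variable {V : Type*} [Fintype V] [DecidableEq V] (G : SimpleGraph V) [DecidableRel G.Adj]

/-- In a fragile graph, every vertex subset of size at least 4 admits a separation
into two nonempty parts after removing at most two vertices. -/
lemma frag_sep (hG : G.Fragile) (A : Finset V) (hA : 4 ≤ A.card) :
    ∃ S A₁ A₂ : Finset V, S ⊆ A ∧ S.card ≤ 2 ∧ A₁.Nonempty ∧ A₂.Nonempty ∧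
      A₁ ∪ A₂ = A \ S ∧ Disjoint A₁ A₂ ∧ ∀ x ∈ A₁, ∀ y ∈ A₂, ¬ G.Adj x y := by
  classical
  have hnot := hG ((⊤ : G.Subgraph).induce (A : Set V))
  rw [SimpleGraph.IsKConnected] at hnot
  push_neg at hnot
  have hcard : Nat.card ↥(((⊤ : G.Subgraph).induce (A : Set V)).verts) = A.card := by
    show Nat.card ↥(A : Set V) = A.card
    rw [Nat.card_coe_set_eq, Set.ncard_coe_finset]
  obtain ⟨S, hS2, hSdis⟩ := hnot (by omega)
  have hS2' : S.ncard ≤ 2 := hS2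
  have hne : Nonempty ↥(Sᶜ : Set ↥(((⊤ : G.Subgraph).induce (A : Set V)).verts)) := by
    by_contra h
    have huniv : S = Set.univ := by
      ext z
      simp only [Set.mem_univ, iff_true]
      by_contra hz
      exact h ⟨⟨z, hz⟩⟩
    rw [huniv, Set.ncard_univ, hcard] at hS2'
    omega
  rw [SimpleGraph.connected_iff] at hSdis
  push_neg at hSdis
  have hnp : ¬ (((⊤ : G.Subgraph).induce (A : Set V)).coe.induce Sᶜ).Preconnected :=
    fun h => (hSdis h).elim hne.some
  simp only [SimpleGraph.Preconnected, not_forall] at hnp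
  obtain ⟨u, v, huv⟩ := hnp
  -- the separator, as a finset of `V`
  set S' : Finset V := (Set.toFinite S).toFinset.image
      (fun z => ((z : ↥(((⊤ : G.Subgraph).induce (A : Set V)).verts)) : V)) with hS'def
  have memS' : ∀ (x : V) (hx : x ∈ (((⊤ : G.Subgraph).induce (A : Set V)).verts)),
      ((⟨x, hx⟩ : ↥(((⊤ : G.Subgraph).induce (A : Set V)).verts)) ∈ S ↔ x ∈ S') := by
    intro x hx
    constructor
    · intro h
      exact mem_image.mpr ⟨⟨x, hx⟩, (Set.Finite.mem_toFinset _).mpr h, rfl⟩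
    · intro h
      obtain ⟨z, hz, hzx⟩ := mem_image.mp h
      have hzz : z = ⟨x, hx⟩ := Subtype.ext hzx
      rw [← hzz]
      exact (Set.Finite.mem_toFinset _).mp hz
  have hS'sub : S' ⊆ A := by
    intro x hx
    obtain ⟨z, _, hzx⟩ := mem_image.mp hx
    have hz2 := z.2
    rw [hzx] at hz2
    exact hz2
  have hS'card : S'.card ≤ 2 := by
    refine le_trans card_image_le ?_
    rwa [← Set.ncard_eq_toFinset_card]
  -- reachability predicate on `V`
  set R : V → Prop := fun y => ∃ (hy : y ∈ (((⊤ : G.Subgraph).induce (A : Set V)).verts))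
      (hy' : (⟨y, hy⟩ : ↥(((⊤ : G.Subgraph).induce (A : Set V)).verts)) ∈ Sᶜ),
      (((⊤ : G.Subgraph).induce (A : Set V)).coe.induce Sᶜ).Reachable u ⟨⟨y, hy⟩, hy'⟩
      with hRdef
  have hA1sub : A.filter R ⊆ A \ S' := by
    intro x hx
    obtain ⟨hxA, hx1, hx2, _⟩ := mem_filter.mp hx
    exact mem_sdiff.mpr ⟨hxA, fun h => hx2 ((memS' x hx1).mpr h)⟩
  have hclose : ∀ x ∈ A.filter R, ∀ y ∈ A, y ∉ S' → G.Adj x y → y ∈ A.filter R := by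
    intro x hx y hyA hyS' hxy
    obtain ⟨hxA, hx1, hx2, hr⟩ := mem_filter.mp hx
    have hy1 : y ∈ (((⊤ : G.Subgraph).induce (A : Set V)).verts) := hyA
    have hy2 : (⟨y, hy1⟩ : ↥(((⊤ : G.Subgraph).induce (A : Set V)).verts)) ∈ Sᶜ :=
      fun h => hyS' ((memS' y hy1).mp h)
    have hadj : (((⊤ : G.Subgraph).induce (A : Set V)).coe.induce Sᶜ).Adj
        ⟨⟨x, hx1⟩, hx2⟩ ⟨⟨y, hy1⟩, hy2⟩ := ⟨hx1, hy1, hxy⟩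
    exact mem_filter.mpr ⟨hyA, hy1, hy2, hr.trans hadj.reachable⟩
  have ha : ((u : ↥(((⊤ : G.Subgraph).induce (A : Set V)).verts)) : V) ∈ A.filter R := by
    refine mem_filter.mpr ⟨(u : ↥(((⊤ : G.Subgraph).induce (A : Set V)).verts)).2, ?_⟩
    have h1 : (⟨((u : ↥(((⊤ : G.Subgraph).induce (A : Set V)).verts)) : V),
        (u : ↥(((⊤ : G.Subgraph).induce (A : Set V)).verts)).2⟩ :
        ↥(((⊤ : G.Subgraph).induce (A : Set V)).verts)) = ↑u := Subtype.ext rfl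
    refine ⟨(u : ↥(((⊤ : G.Subgraph).induce (A : Set V)).verts)).2, h1 ▸ u.2, ?_⟩
    have h2 : (⟨_, h1 ▸ u.2⟩ : ↥(Sᶜ : Set ↥(((⊤ : G.Subgraph).induce (A : Set V)).verts)))
        = u := Subtype.ext h1
    rw [h2]
  have hbAS : ((v : ↥(((⊤ : G.Subgraph).induce (A : Set V)).verts)) : V) ∈ A \ S' := by
    refine mem_sdiff.mpr ⟨(v : ↥(((⊤ : G.Subgraph).induce (A : Set V)).verts)).2, ?_⟩
    intro h
    have h1 : (⟨((v : ↥(((⊤ : G.Subgraph).induce (A : Set V)).verts)) : V),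
        (v : ↥(((⊤ : G.Subgraph).induce (A : Set V)).verts)).2⟩ :
        ↥(((⊤ : G.Subgraph).induce (A : Set V)).verts)) = ↑v := Subtype.ext rfl
    have hmem := (memS' _ (v : ↥(((⊤ : G.Subgraph).induce (A : Set V)).verts)).2).mpr h
    rw [h1] at hmem
    exact v.2 hmem
  have hbnot : ((v : ↥(((⊤ : G.Subgraph).induce (A : Set V)).verts)) : V) ∉ A.filter R := by
    intro h
    obtain ⟨_, hy1, hy2, hr⟩ := mem_filter.mp h
    have h2 : (⟨⟨_, hy1⟩, hy2⟩ : ↥(Sᶜ : Set ↥(((⊤ : G.Subgraph).induce (A : Set V)).verts)))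
        = v := Subtype.ext (Subtype.ext rfl)
    rw [h2] at hr
    exact huv hr
  refine ⟨S', A.filter R, (A \ S') \ A.filter R, hS'sub, hS'card,
    ⟨_, ha⟩, ⟨_, mem_sdiff.mpr ⟨hbAS, hbnot⟩⟩, union_sdiff_of_subset hA1sub,
    disjoint_sdiff, ?_⟩
  intro x hx y hy hxy
  obtain ⟨hyAS, hyA1⟩ := mem_sdiff.mp hy
  obtain ⟨hyA, hyS'⟩ := mem_sdiff.mp hyAS
  exact hyA1 (hclose x hx y hyA hyS' hxy)

/-- Number of ordered adjacent pairs inside `A`. -/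
def pairsIn (A : Finset V) : ℕ := ((A ×ˢ A).filter fun p => G.Adj p.1 p.2).card

lemma pairsIn_erase (A : Finset V) (v : V) :
    pairsIn G A ≤ pairsIn G (A.erase v) + 2 * (A.filter (G.Adj v)).card := by
  have hsub : (A ×ˢ A).filter (fun p => G.Adj p.1 p.2) ⊆
      (((A.erase v) ×ˢ (A.erase v)).filter fun p => G.Adj p.1 p.2) ∪
      ({v} ×ˢ A.filter (G.Adj v)) ∪ ((A.filter (G.Adj v)) ×ˢ {v}) := by
    intro p hp
    obtain ⟨hmem, hadj⟩ := mem_filter.mp hp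
    obtain ⟨h1, h2⟩ := mem_product.mp hmem
    by_cases hp1 : p.1 = v
    · refine mem_union_left _ (mem_union_right _ ?_)
      refine mem_product.mpr ⟨mem_singleton.mpr hp1, mem_filter.mpr ⟨h2, ?_⟩⟩
      rwa [← hp1]
    · by_cases hp2 : p.2 = v
      · refine mem_union_right _ ?_
        refine mem_product.mpr ⟨mem_filter.mpr ⟨h1, ?_⟩, mem_singleton.mpr hp2⟩
        rw [← hp2]
        exact hadj.symm
      · refine mem_union_left _ (mem_union_left _ ?_)
        exact mem_filter.mpr ⟨mem_product.mpr ⟨mem_erase.mpr ⟨hp1, h1⟩,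
          mem_erase.mpr ⟨hp2, h2⟩⟩, hadj⟩
  have h1 := card_le_card hsub
  have h2 := card_union_le ((((A.erase v) ×ˢ (A.erase v)).filter fun p => G.Adj p.1 p.2) ∪
      ({v} ×ˢ A.filter (G.Adj v))) ((A.filter (G.Adj v)) ×ˢ {v})
  have h3 := card_union_le (((A.erase v) ×ˢ (A.erase v)).filter fun p => G.Adj p.1 p.2)
      ({v} ×ˢ A.filter (G.Adj v))
  have h4 : ({v} ×ˢ A.filter (G.Adj v)).card = (A.filter (G.Adj v)).card := by
    rw [card_product, card_singleton, one_mul]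
  have h5 : ((A.filter (G.Adj v)) ×ˢ ({v} : Finset V)).card = (A.filter (G.Adj v)).card := by
    rw [card_product, card_singleton, mul_one]
  unfold pairsIn
  omega

lemma pairsIn_le_sq (A : Finset V) : pairsIn G A + A.card ≤ A.card * A.card := by
  have hdiag : ((A ×ˢ A).filter fun p => p.1 = p.2) = A.image (fun x => (x, x)) := by
    ext ⟨x, y⟩
    simp only [mem_filter, mem_product, mem_image]
    constructor
    · rintro ⟨⟨ha1, _⟩, h3⟩
      cases h3
      exact ⟨x, ha1, rfl⟩
    · rintro ⟨z, hz, h⟩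
      injection h with h1 h2
      subst h1
      subst h2
      exact ⟨⟨hz, hz⟩, rfl⟩
  have hdisj : Disjoint ((A ×ˢ A).filter fun p => G.Adj p.1 p.2)
      ((A ×ˢ A).filter fun p => p.1 = p.2) := by
    rw [Finset.disjoint_left]
    intro p hp hq
    exact (mem_filter.mp hp).2.ne (mem_filter.mp hq).2
  have hinj : Function.Injective (fun x : V => (x, x)) := fun a b h => congrArg Prod.fst h
  calc pairsIn G A + A.card
      = ((A ×ˢ A).filter fun p => G.Adj p.1 p.2).card
        + ((A ×ˢ A).filter fun p => p.1 = p.2).card := by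
        rw [pairsIn, hdiag, card_image_of_injective _ hinj]
    _ = (((A ×ˢ A).filter fun p => G.Adj p.1 p.2)
        ∪ ((A ×ˢ A).filter fun p => p.1 = p.2)).card := (card_union_of_disjoint hdisj).symm
    _ ≤ (A ×ˢ A).card := card_le_card (union_subset (filter_subset _ _) (filter_subset _ _))
    _ = A.card * A.card := card_product _ _

lemma frag_main (hG : G.Fragile) :
    ∀ n (A : Finset V), A.card ≤ n → 4 ≤ A.card → pairsIn G A + 10 ≤ 5 * A.card := by
  intro n
  induction n with
  | zero => intro A h h4; omega
  | succ n ih =>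
    intro A hAn hA4
    by_cases hdeg : ∃ v ∈ A, (A.filter (G.Adj v)).card ≤ 2
    · obtain ⟨v, hv, hdv⟩ := hdeg
      have herase := pairsIn_erase G A v
      have hec : (A.erase v).card = A.card - 1 := card_erase_of_mem hv
      by_cases h4 : A.card = 4
      · have hsq := pairsIn_le_sq G (A.erase v)
        rw [hec, h4] at hsq
        omega
      · have hih := ih (A.erase v) (by omega) (by omega)
        omega
    · push_neg at hdeg
      obtain ⟨S, A₁, A₂, hSA, hS2, hA1ne, hA2ne, hunion, hdisj, hnoedge⟩ := frag_sep G hG A hA4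
      have hA1A : ∀ x ∈ A₁, x ∈ A ∧ x ∉ S := by
        intro x hx
        exact mem_sdiff.mp (hunion ▸ mem_union_left A₂ hx)
      have hA2A : ∀ x ∈ A₂, x ∈ A ∧ x ∉ S := by
        intro x hx
        exact mem_sdiff.mp (hunion ▸ mem_union_right A₁ hx)
      have tri : ∀ x ∈ A, x ∈ A₁ ∨ x ∈ A₂ ∨ x ∈ S := by
        intro x hx
        by_cases hxS : x ∈ S
        · exact Or.inr (Or.inr hxS)
        · have : x ∈ A₁ ∪ A₂ := hunion ▸ mem_sdiff.mpr ⟨hx, hxS⟩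
          rcases mem_union.mp this with h | h
          · exact Or.inl h
          · exact Or.inr (Or.inl h)
      have hcover : (A ×ˢ A).filter (fun p => G.Adj p.1 p.2) ⊆
          (((A₁ ∪ S) ×ˢ (A₁ ∪ S)).filter fun p => G.Adj p.1 p.2) ∪
          (((A₂ ∪ S) ×ˢ (A₂ ∪ S)).filter fun p => G.Adj p.1 p.2) := by
        intro p hp
        obtain ⟨hmem, hadj⟩ := mem_filter.mp hp
        obtain ⟨h1, h2⟩ := mem_product.mp hmem
        have h1' := tri p.1 h1
        have h2' := tri p.2 h2
        have hne1 : ¬(p.1 ∈ A₁ ∧ p.2 ∈ A₂) := fun h => hnoedge _ h.1 _ h.2 hadj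
        have hne2 : ¬(p.2 ∈ A₁ ∧ p.1 ∈ A₂) := fun h => hnoedge _ h.1 _ h.2 hadj.symm
        simp only [mem_union, mem_filter, mem_product]
        tauto
      have hB1A : A₁ ∪ S ⊆ A := union_subset (fun x hx => (hA1A x hx).1) hSA
      have hB2A : A₂ ∪ S ⊆ A := union_subset (fun x hx => (hA2A x hx).1) hSA
      obtain ⟨a, haA1⟩ := hA1ne
      obtain ⟨b, hbA2⟩ := hA2ne
      have haA := (hA1A a haA1).1
      have hbA := (hA2A b hbA2).1
      -- B₁ has at least 4 elements
      have hB1c : 4 ≤ (A₁ ∪ S).card := by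
        have hins : insert a (A.filter (G.Adj a)) ⊆ A₁ ∪ S := by
          intro y hy
          rcases mem_insert.mp hy with rfl | hy
          · exact mem_union_left _ haA1
          · obtain ⟨hyA, hyadj⟩ := mem_filter.mp hy
            rcases tri y hyA with h | h | h
            · exact mem_union_left _ h
            · exact absurd hyadj (fun hh => hnoedge _ haA1 _ h hh)
            · exact mem_union_right _ h
        have hanotmem : a ∉ A.filter (G.Adj a) := by
          intro h
          exact G.irrefl (mem_filter.mp h).2
        have := card_le_card hins
        rw [card_insert_of_notMem hanotmem] at this
        have hd := hdeg a haA
        omega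
      have hB2c : 4 ≤ (A₂ ∪ S).card := by
        have hins : insert b (A.filter (G.Adj b)) ⊆ A₂ ∪ S := by
          intro y hy
          rcases mem_insert.mp hy with rfl | hy
          · exact mem_union_left _ hbA2
          · obtain ⟨hyA, hyadj⟩ := mem_filter.mp hy
            rcases tri y hyA with h | h | h
            · exact absurd hyadj (fun hh => hnoedge _ h _ hbA2 hh.symm)
            · exact mem_union_left _ h
            · exact mem_union_right _ h
        have hbnotmem : b ∉ A.filter (G.Adj b) := by
          intro h
          exact G.irrefl (mem_filter.mp h).2
        have := card_le_card hins
        rw [card_insert_of_notMem hbnotmem] at this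
        have hd := hdeg b hbA
        omega
      have hB1lt : (A₁ ∪ S).card < A.card := by
        refine card_lt_card ((ssubset_iff_of_subset hB1A).mpr ⟨b, hbA, ?_⟩)
        intro h
        rcases mem_union.mp h with h | h
        · exact (disjoint_left.mp hdisj h) hbA2
        · exact (hA2A b hbA2).2 h
      have hB2lt : (A₂ ∪ S).card < A.card := by
        refine card_lt_card ((ssubset_iff_of_subset hB2A).mpr ⟨a, haA, ?_⟩)
        intro h
        rcases mem_union.mp h with h | h
        · exact (disjoint_left.mp hdisj.symm h) haA1
        · exact (hA1A a haA1).2 h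
      have hsum : (A₁ ∪ S).card + (A₂ ∪ S).card ≤ A.card + 2 := by
        have h1 := card_union_le A₁ S
        have h2 := card_union_le A₂ S
        have h3 : A₁.card + A₂.card = (A \ S).card := by
          rw [← hunion, card_union_of_disjoint hdisj]
        have h4 : (A \ S).card = A.card - S.card := card_sdiff_of_subset hSA
        have h5 : S.card ≤ A.card := card_le_card hSA
        omega
      have ih1 := ih (A₁ ∪ S) (by omega) hB1c
      have ih2 := ih (A₂ ∪ S) (by omega) hB2c
      have hP : pairsIn G A ≤ pairsIn G (A₁ ∪ S) + pairsIn G (A₂ ∪ S) :=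
        le_trans (card_le_card hcover) (card_union_le _ _)
      omega

end Aux

/-- Every fragile graph on at least 4 vertices satisfies `2|E(G)| ≤ 5|V(G)| - 10`. -/
theorem statement8 {V : Type*} [Fintype V] (G : SimpleGraph V) [DecidableRel G.Adj]
    (hG : G.Fragile) (hV : 4 ≤ Fintype.card V) :
    2 * G.edgeFinset.card ≤ 5 * Fintype.card V - 10 := by
  classical
  have h := frag_main G hG (Fintype.card V) Finset.univ (by rw [Finset.card_univ])
    (by rwa [Finset.card_univ])
  rw [Finset.card_univ] at h
  have he : 2 * G.edgeFinset.card = pairsIn G Finset.univ := by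
    rw [SimpleGraph.two_mul_card_edgeFinset, pairsIn, Finset.univ_product_univ]
  omega
end

section
/- Every fragile finite simple graph with at least one vertex contains a vertex of degree at most 4. -/
set_option linter.unusedSectionVars false

namespace FragileAux

open Finset

variable {V : Type*} [Fintype V] [DecidableEq V] (G : SimpleGraph V) [DecidableRel G.Adj]

/-- internal degree of `v` into `s` -/
def dIn (s : Finset V) (v : V) : ℕ := (s.filter (fun x => G.Adj v x)).card

/-- internal degree sum of `s` -/
def DIn (s : Finset V) : ℕ := ∑ v ∈ s, dIn G s v

variable {G}

lemma dIn_union {s t : Finset V} (h : Disjoint s t) (v : V) :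
    dIn G (s ∪ t) v = dIn G s v + dIn G t v := by
  unfold dIn
  rw [filter_union, card_union_of_disjoint (h.mono (filter_subset _ _) (filter_subset _ _))]

lemma dIn_le {s : Finset V} {v : V} (hv : v ∈ s) : dIn G s v ≤ s.card - 1 := by
  have : s.filter (fun x => G.Adj v x) ⊆ s.erase v := by
    intro x hx
    rw [mem_filter] at hx
    exact mem_erase.2 ⟨fun h => G.ne_of_adj hx.2 h.symm, hx.1⟩
  calc dIn G s v ≤ (s.erase v).card := card_le_card this
    _ = s.card - 1 := card_erase_of_mem hv

lemma dIn_le' {s : Finset V} (v : V) : dIn G s v ≤ s.card := card_le_card (filter_subset _ _)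

lemma DIn_le {s : Finset V} : DIn G s ≤ s.card * (s.card - 1) := by
  calc DIn G s ≤ ∑ v ∈ s, (s.card - 1) := Finset.sum_le_sum (fun v hv => dIn_le hv)
    _ = s.card * (s.card - 1) := by rw [Finset.sum_const, smul_eq_mul]

/-- the split identity -/
lemma DIn_split {A B S : Finset V} (hAB : Disjoint A B) (hAS : Disjoint A S)
    (hBS : Disjoint B S) (hno : ∀ a ∈ A, ∀ b ∈ B, ¬ G.Adj a b) :
    DIn G (A ∪ B ∪ S) + DIn G S = DIn G (A ∪ S) + DIn G (B ∪ S) := by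
  have hAB0 : ∀ v ∈ A, dIn G B v = 0 := by
    intro v hv
    unfold dIn
    rw [card_eq_zero, filter_eq_empty_iff]
    exact fun b hb => hno v hv b hb
  have hBA0 : ∀ v ∈ B, dIn G A v = 0 := by
    intro v hv
    unfold dIn
    rw [card_eq_zero, filter_eq_empty_iff]
    exact fun a ha hadj => hno a ha v hv (G.adj_symm hadj)
  have hsplit : ∀ v, dIn G (A ∪ B ∪ S) v = dIn G A v + dIn G B v + dIn G S v := by
    intro v
    rw [dIn_union (by exact Finset.disjoint_union_left.2 ⟨hAS, hBS⟩),
        dIn_union hAB]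
  have hASs : ∀ v, dIn G (A ∪ S) v = dIn G A v + dIn G S v := fun v => dIn_union hAS v
  have hBSs : ∀ v, dIn G (B ∪ S) v = dIn G B v + dIn G S v := fun v => dIn_union hBS v
  unfold DIn
  rw [Finset.sum_union (Finset.disjoint_union_left.2 ⟨hAS, hBS⟩),
      Finset.sum_union hAB,
      Finset.sum_union hAS, Finset.sum_union hBS]
  have h1 : ∑ v ∈ A, dIn G (A ∪ B ∪ S) v = ∑ v ∈ A, dIn G (A ∪ S) v := by
    apply Finset.sum_congr rfl
    intro v hv
    rw [hsplit, hASs, hAB0 v hv]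
    omega
  have h2 : ∑ v ∈ B, dIn G (A ∪ B ∪ S) v = ∑ v ∈ B, dIn G (B ∪ S) v := by
    apply Finset.sum_congr rfl
    intro v hv
    rw [hsplit, hBSs, hBA0 v hv]
    omega
  have h3 : ∀ v, dIn G (A ∪ B ∪ S) v + dIn G S v = dIn G (A ∪ S) v + dIn G (B ∪ S) v := by
    intro v
    rw [hsplit, hASs, hBSs]
    ring
  have h4 : ∑ v ∈ S, dIn G (A ∪ B ∪ S) v + ∑ v ∈ S, dIn G S v
      = ∑ v ∈ S, dIn G (A ∪ S) v + ∑ v ∈ S, dIn G (B ∪ S) v := by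
    rw [← Finset.sum_add_distrib, ← Finset.sum_add_distrib]
    exact Finset.sum_congr rfl (fun v _ => h3 v)
  omega

/-- piece bound for small pieces -/
lemma DIn_piece {A S : Finset V} (hAS : Disjoint A S) :
    DIn G (A ∪ S) ≤ DIn G S + A.card * (A.card - 1 + 2 * S.card) := by
  rcases A.eq_empty_or_nonempty with rfl | hA
  · simp
  have hA1 : 1 ≤ A.card := card_pos.2 hA
  unfold DIn
  rw [Finset.sum_union hAS]
  have h1 : ∑ v ∈ A, dIn G (A ∪ S) v ≤ A.card * (A.card - 1 + S.card) := by
    calc ∑ v ∈ A, dIn G (A ∪ S) v ≤ ∑ v ∈ A, ((A ∪ S).card - 1) :=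
          Finset.sum_le_sum (fun v hv => dIn_le (mem_union_left _ hv))
      _ = A.card * ((A ∪ S).card - 1) := by rw [Finset.sum_const, smul_eq_mul]
      _ ≤ A.card * (A.card - 1 + S.card) := by
          apply Nat.mul_le_mul_left
          have := card_union_of_disjoint hAS
          omega
  have h2 : ∑ v ∈ S, dIn G (A ∪ S) v ≤ ∑ v ∈ S, dIn G S v + S.card * A.card := by
    calc ∑ v ∈ S, dIn G (A ∪ S) v = ∑ v ∈ S, (dIn G A v + dIn G S v) :=
          Finset.sum_congr rfl (fun v _ => dIn_union hAS v)
      _ ≤ ∑ v ∈ S, (A.card + dIn G S v) :=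
          Finset.sum_le_sum (fun v _ => Nat.add_le_add_right (dIn_le' v) _)
      _ = S.card * A.card + ∑ v ∈ S, dIn G S v := by
          rw [Finset.sum_add_distrib, Finset.sum_const, smul_eq_mul]
      _ = ∑ v ∈ S, dIn G S v + S.card * A.card := by ring
  have : A.card * (A.card - 1 + S.card) + S.card * A.card
      = A.card * (A.card - 1 + 2 * S.card) := by ring_nf
  omega

lemma sep (hG : G.Fragile) (s : Finset V) (hs : 4 ≤ s.card) :
    ∃ A B S : Finset V, A ∪ B ∪ S = s ∧ Disjoint A B ∧ Disjoint A S ∧ Disjoint B S ∧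
      A.Nonempty ∧ B.Nonempty ∧ S.card ≤ 2 ∧ ∀ a ∈ A, ∀ b ∈ B, ¬ G.Adj a b := by
  classical
  set H : G.Subgraph := (⊤ : G.Subgraph).induce ↑s with hH
  have hverts : H.verts = ↑s := rfl
  have hnk := hG H
  rw [SimpleGraph.IsKConnected] at hnk
  push_neg at hnk
  have hcard : Nat.card H.verts = s.card := by
    show Nat.card (↑s : Set V) = s.card
    rw [Nat.card_coe_set_eq, Set.ncard_coe_finset]
  obtain ⟨S0, hS0card, hS0nc⟩ := hnk (by omega)
  -- the cut as a Finset of V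
  set T : Finset V := Set.Finite.toFinset (Set.toFinite (Subtype.val '' S0)) with hT
  have hTmem : ∀ v : V, v ∈ T ↔ ∃ x : H.verts, x ∈ S0 ∧ (x : V) = v := by
    intro v
    simp [hT, Set.Finite.mem_toFinset, Set.mem_image]
  have hTcard : T.card ≤ 2 := by
    have h1 : T.card = (Subtype.val '' S0).ncard :=
      (Set.ncard_eq_toFinset_card (Subtype.val '' S0) (Set.toFinite _)).symm
    have h2 : (Subtype.val '' S0).ncard = S0.ncard :=
      Set.ncard_image_of_injective _ Subtype.val_injective
    omega
  have hTs : T ⊆ s := by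
    intro v hv
    obtain ⟨x, _, hxv⟩ := (hTmem v).1 hv
    have hx : (x : V) ∈ (↑s : Set V) := x.2
    rw [hxv] at hx
    simpa using hx
  -- the induced graph on s \ T at the level of V
  set K : SimpleGraph (↑(s \ T) : Set V) := G.induce (↑(s \ T) : Set V) with hK
  -- isomorphism with the doubly-induced graph
  have he : Nonempty ((H.coe.induce S0ᶜ) ≃g K) := by
    refine ⟨⟨?_, ?_⟩⟩
    · refine ⟨fun x => ⟨x.1.1, ?_⟩, fun v => ⟨⟨v.1, ?_⟩, ?_⟩, ?_, ?_⟩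
      · have hx1 : (x.1 : V) ∈ s := by
          have hx : ((x.1 : _) : V) ∈ (↑s : Set V) := x.1.2
          simpa using hx
        have hx2 : (x.1 : V) ∉ T := by
          intro hmem
          obtain ⟨y, hy, hyx⟩ := (hTmem _).1 hmem
          exact x.2 (by rwa [Subtype.ext hyx] at hy)
        simp [Finset.mem_sdiff, hx1, hx2]
      · have := v.2
        simp only [Finset.coe_sdiff, Set.mem_diff, Finset.mem_coe] at this
        show (v : V) ∈ (↑s : Set V)
        simpa using this.1
      · intro hS0
        have := v.2
        simp only [Finset.coe_sdiff, Set.mem_diff, Finset.mem_coe] at this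
        exact this.2 ((hTmem _).2 ⟨_, hS0, rfl⟩)
      · intro x; rfl
      · intro v; rfl
    · intro x y
      simp only [Equiv.coe_fn_mk, hK, hH, SimpleGraph.comap_adj, Function.Embedding.coe_subtype,
        SimpleGraph.Subgraph.coe_adj, SimpleGraph.Subgraph.induce_adj,
        SimpleGraph.Subgraph.top_adj]
      constructor
      · intro h
        refine ⟨?_, ?_, h⟩
        · exact x.1.2
        · exact y.1.2
      · intro h
        exact h.2.2
  obtain ⟨e⟩ := he
  have hKnc : ¬ K.Connected := fun h => hS0nc (e.connected_iff.mpr h)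
  -- s \ T is nonempty
  have hsT : 2 ≤ (s \ T).card := by
    have h3 : s.card - T.card ≤ (s \ T).card := Finset.le_card_sdiff T s
    omega
  have hne : Nonempty (↑(s \ T) : Set V) := by
    obtain ⟨v, hv⟩ := Finset.card_pos.mp (by omega : 0 < (s \ T).card)
    exact ⟨⟨v, by simpa using hv⟩⟩
  have hpre : ¬ K.Preconnected := by
    intro hp
    exact hKnc ((SimpleGraph.connected_iff K).mpr ⟨hp, hne⟩)
  rw [SimpleGraph.Preconnected] at hpre
  push_neg at hpre
  obtain ⟨x, y, hxy⟩ := hpre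
  -- define A and B by reachability from x
  set A : Finset V := (s \ T).filter
    (fun w => ∃ hw : w ∈ (↑(s \ T) : Set V), K.Reachable x ⟨w, hw⟩) with hA
  set B : Finset V := (s \ T).filter
    (fun w => ¬ ∃ hw : w ∈ (↑(s \ T) : Set V), K.Reachable x ⟨w, hw⟩) with hB
  have hABdisj : Disjoint A B := Finset.disjoint_filter_filter_not _ _ _
  have hAB : A ∪ B = s \ T := Finset.filter_union_filter_not_eq _ _
  have hAT : Disjoint A T := by
    have : A ⊆ s \ T := Finset.filter_subset _ _
    exact Finset.disjoint_left.mpr (fun v hv hvT =>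
      (Finset.mem_sdiff.mp (this hv)).2 hvT)
  have hBT : Disjoint B T := by
    have : B ⊆ s \ T := Finset.filter_subset _ _
    exact Finset.disjoint_left.mpr (fun v hv hvT =>
      (Finset.mem_sdiff.mp (this hv)).2 hvT)
  refine ⟨A, B, T, ?_, hABdisj, hAT, hBT, ?_, ?_, hTcard, ?_⟩
  · rw [hAB]
    exact Finset.sdiff_union_of_subset hTs
  · refine ⟨x.1, Finset.mem_filter.mpr ⟨by simpa using x.2, ⟨x.2, ?_⟩⟩⟩
    exact SimpleGraph.Reachable.refl _
  · refine ⟨y.1, Finset.mem_filter.mpr ⟨by simpa using y.2, ?_⟩⟩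
    rintro ⟨hw, hr⟩
    exact hxy (by convert hr)
  · intro a ha b hb hadj
    rw [hA, Finset.mem_filter] at ha
    rw [hB, Finset.mem_filter] at hb
    obtain ⟨has, hwa, hra⟩ := ha
    refine hb.2 ⟨by simpa using hb.1, ?_⟩
    refine hra.trans (SimpleGraph.Adj.reachable ?_)
    simp only [hK, SimpleGraph.comap_adj, Function.Embedding.coe_subtype]
    exact hadj


lemma arith_small (a b t D Dt : ℕ) (ha : 1 ≤ a) (hb : 1 ≤ b) (hat : a + t ≤ 3) (hbt : b + t ≤ 3)
    (hDt : Dt ≤ t * (t - 1)) (h4 : 4 ≤ a + b + t)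
    (hD : D + Dt ≤ (Dt + a * (a - 1 + 2 * t)) + (Dt + b * (b - 1 + 2 * t))) :
    D + 10 ≤ 5 * (a + b + t) := by
  have ht : t ≤ 2 := by omega
  have ha3 : a ≤ 3 := by omega
  have hb3 : b ≤ 3 := by omega
  interval_cases t <;> interval_cases a <;> interval_cases b <;> omega

lemma arith_mixed (a b t D Dt D2 : ℕ) (ha : 1 ≤ a) (hat : a + t ≤ 3)
    (hDt : Dt ≤ t * (t - 1)) (hD2 : D2 + 10 ≤ 5 * (b + t))
    (hD : D + Dt ≤ (Dt + a * (a - 1 + 2 * t)) + D2) : D + 10 ≤ 5 * (a + b + t) := by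
  have ht : t ≤ 2 := by omega
  have ha3 : a ≤ 3 := by omega
  interval_cases t <;> interval_cases a <;> omega

lemma main_bound (hG : G.Fragile) : ∀ s : Finset V, 4 ≤ s.card → DIn G s + 10 ≤ 5 * s.card := by
  intro s
  induction s using Finset.strongInductionOn with
  | _ s ih =>
    intro hs4
    obtain ⟨A, B, T, hunion, hAB, hAT, hBT, hAne, hBne, hT2, hno⟩ := sep hG s hs4
    have hsplit := DIn_split (G := G) hAB hAT hBT hno
    rw [hunion] at hsplit
    have hcardAT : (A ∪ T).card = A.card + T.card := card_union_of_disjoint hAT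
    have hcardBT : (B ∪ T).card = B.card + T.card := card_union_of_disjoint hBT
    have hcards : s.card = A.card + B.card + T.card := by
      rw [← hunion, card_union_of_disjoint (disjoint_union_left.2 ⟨hAT, hBT⟩),
        card_union_of_disjoint hAB]
    have hA1 : 1 ≤ A.card := card_pos.2 hAne
    have hB1 : 1 ≤ B.card := card_pos.2 hBne
    have hsubA : A ∪ T ⊆ s := by
      intro v hv
      rw [← hunion]
      rw [mem_union] at hv ⊢
      rcases hv with hv | hv
      · exact Or.inl (mem_union_left _ hv)
      · exact Or.inr hv
    have hsubB : B ∪ T ⊆ s := by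
      intro v hv
      rw [← hunion]
      rw [mem_union] at hv ⊢
      rcases hv with hv | hv
      · exact Or.inl (mem_union_right _ hv)
      · exact Or.inr hv
    have hssA : A ∪ T ⊂ s := by
      rw [Finset.ssubset_iff_of_subset hsubA]
      obtain ⟨b, hb⟩ := hBne
      refine ⟨b, by rw [← hunion]; exact mem_union_left _ (mem_union_right _ hb), ?_⟩
      rw [mem_union]
      push_neg
      exact ⟨Finset.disjoint_right.1 hAB hb, Finset.disjoint_left.1 hBT hb⟩
    have hssB : B ∪ T ⊂ s := by
      rw [Finset.ssubset_iff_of_subset hsubB]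
      obtain ⟨a, ha⟩ := hAne
      refine ⟨a, by rw [← hunion]; exact mem_union_left _ (mem_union_left _ ha), ?_⟩
      rw [mem_union]
      push_neg
      exact ⟨Finset.disjoint_left.1 hAB ha, Finset.disjoint_left.1 hAT ha⟩
    have hDT : DIn G T ≤ T.card * (T.card - 1) := DIn_le
    by_cases hbigA : 4 ≤ A.card + T.card
    · by_cases hbigB : 4 ≤ B.card + T.card
      · have h1 := ih _ hssA (by rw [hcardAT]; exact hbigA)
        have h2 := ih _ hssB (by rw [hcardBT]; exact hbigB)
        rw [hcardAT] at h1
        rw [hcardBT] at h2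
        omega
      · -- B small, A big
        have h1 := ih _ hssA (by rw [hcardAT]; exact hbigA)
        rw [hcardAT] at h1
        have h2 := DIn_piece (G := G) hBT
        have := arith_mixed B.card A.card T.card (DIn G s) (DIn G T) (DIn G (A ∪ T))
          hB1 (by omega) hDT h1 (by omega)
        omega
    · by_cases hbigB : 4 ≤ B.card + T.card
      · -- A small, B big
        have h1 := ih _ hssB (by rw [hcardBT]; exact hbigB)
        rw [hcardBT] at h1
        have h2 := DIn_piece (G := G) hAT
        have := arith_mixed A.card B.card T.card (DIn G s) (DIn G T) (DIn G (B ∪ T))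
          hA1 (by omega) hDT h1 (by omega)
        omega
      · -- both small
        have h1 := DIn_piece (G := G) hAT
        have h2 := DIn_piece (G := G) hBT
        have := arith_small A.card B.card T.card (DIn G s) (DIn G T)
          hA1 hB1 (by omega) (by omega) hDT (by omega) (by omega)
        omega

theorem statement9' : G.Fragile → Nonempty V → ∃ v : V, G.degree v ≤ 4 := by
  intro hG hV
  classical
  by_contra hcon
  push_neg at hcon
  have hdeg : ∀ v : V, 5 ≤ G.degree v := fun v => hcon v
  have hdIn : ∀ v : V, dIn G univ v = G.degree v := by
    intro v
    unfold dIn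
    have : univ.filter (fun x => G.Adj v x) = G.neighborFinset v := by
      ext w
      simp [SimpleGraph.mem_neighborFinset]
    rw [this]
    rfl
  have hs4 : 4 ≤ (univ : Finset V).card := by
    obtain ⟨v⟩ := hV
    have h5 := hdeg v
    have hlt : G.degree v < Fintype.card V := G.degree_lt_card_verts v
    simpa [Finset.card_univ] using by omega
  have hmain := main_bound hG univ hs4
  have hDuniv : 5 * (univ : Finset V).card ≤ DIn G univ := by
    calc 5 * (univ : Finset V).card = ∑ _v ∈ (univ : Finset V), 5 := by
          rw [Finset.sum_const, smul_eq_mul]; ring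
      _ ≤ ∑ v ∈ univ, dIn G univ v := Finset.sum_le_sum (fun v _ => by rw [hdIn]; exact hdeg v)
      _ = DIn G univ := rfl
  omega


end FragileAux

/-- Every nonempty fragile graph contains a vertex of degree at most 4. -/
theorem statement9 {V : Type*} [Fintype V] (G : SimpleGraph V) [DecidableRel G.Adj]
    (hG : G.Fragile) (hV : Nonempty V) :
    ∃ v : V, G.degree v ≤ 4 := by
  classical
  exact FragileAux.statement9' hG hV
end

section
/- Every fragile finite simple graph G with girth at least 4 (i.e., containing no cycle of length 3) on at least 3 vertices satisfies |E(G)| ≤ 2·|V(G)| − 4. -/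
section Aux
open Finset
variable {V : Type*} [Fintype V] [DecidableEq V] (G : SimpleGraph V) [DecidableRel G.Adj]
set_option linter.unusedSectionVars false
set_option linter.unnecessarySimpa false

/-- number of ordered adjacent pairs inside U -/
def pc (U : Finset V) : ℕ := #((U ×ˢ U).filter fun q : V × V => G.Adj q.1 q.2)

lemma pc_eq_sum (U : Finset V) : pc G U = ∑ a ∈ U, #(U.filter (G.Adj a)) := by
  unfold pc
  rw [Finset.card_filter, Finset.sum_product]
  exact Finset.sum_congr rfl fun a _ => (Finset.card_filter _ _).symm

lemma pc_univ : pc G Finset.univ = 2 * #G.edgeFinset := by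
  rw [pc_eq_sum, ← SimpleGraph.sum_degrees_eq_twice_card_edges]
  exact Finset.sum_congr rfl fun a _ => by
    rw [← SimpleGraph.neighborFinset_eq_filter]; rfl

lemma card_filter_erase (p : V → Prop) [DecidablePred p] (U : Finset V) {x : V} (hx : x ∈ U) :
    #(U.filter p) = #((U.erase x).filter p) + if p x then 1 else 0 := by
  conv_lhs => rw [← Finset.insert_erase hx, Finset.filter_insert]
  split
  · rw [Finset.card_insert_of_notMem (fun h => (Finset.mem_erase.1 (Finset.mem_filter.1 h).1).1 rfl)]
  · omega

lemma pc_erase (U : Finset V) {x : V} (hx : x ∈ U) :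
    pc G U = pc G (U.erase x) + 2 * #(U.filter (G.Adj x)) := by
  rw [pc_eq_sum, pc_eq_sum, ← Finset.sum_erase_add _ _ hx]
  have h1 : ∀ a ∈ U.erase x, #(U.filter (G.Adj a))
      = #((U.erase x).filter (G.Adj a)) + if G.Adj a x then 1 else 0 :=
    fun a _ => card_filter_erase _ U hx
  rw [Finset.sum_congr rfl h1, Finset.sum_add_distrib, Finset.sum_boole]
  have h2 : (U.erase x).filter (fun a => G.Adj a x) = (U.erase x).filter (G.Adj x) := by
    apply Finset.filter_congr; intro a _; simp [SimpleGraph.adj_comm]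
  have h3 : #((U.erase x).filter (G.Adj x)) = #(U.filter (G.Adj x)) := by
    rw [card_filter_erase (G.Adj x) U hx, if_neg (G.irrefl)]; omega
  simp only [Nat.cast_id]
  rw [h2, h3]
  omega

lemma pc_split (U U1 U2 : Finset V)
    (hcov : ∀ a b, a ∈ U → b ∈ U → G.Adj a b → (a ∈ U1 ∧ b ∈ U1) ∨ (a ∈ U2 ∧ b ∈ U2)) :
    pc G U ≤ pc G U1 + pc G U2 := by
  have hsub : (U ×ˢ U).filter (fun q : V × V => G.Adj q.1 q.2)
      ⊆ ((U1 ×ˢ U1).filter fun q : V × V => G.Adj q.1 q.2)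
        ∪ ((U2 ×ˢ U2).filter fun q : V × V => G.Adj q.1 q.2) := by
    intro q hq
    simp only [Finset.mem_filter, Finset.mem_product] at hq
    rcases hcov q.1 q.2 hq.1.1 hq.1.2 hq.2 with ⟨h1, h2⟩ | ⟨h1, h2⟩ <;>
      simp [Finset.mem_union, Finset.mem_filter, Finset.mem_product, h1, h2, hq.2]
  calc pc G U ≤ _ := Finset.card_le_card hsub
    _ ≤ _ := Finset.card_union_le _ _
lemma pc_triple {a b c : V} (hab' : a ≠ b) (hac : a ≠ c) (hbc : b ≠ c)
    (hab : ¬ G.Adj a b) : pc G {a, b, c} ≤ 4 := by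
  rw [pc_eq_sum]
  rw [Finset.sum_insert (by simp [hab', hac]), Finset.sum_insert (by simp [hbc]),
    Finset.sum_singleton]
  have ha : #((({a, b, c} : Finset V)).filter (G.Adj a)) ≤ 1 := by
    refine le_trans (Finset.card_le_card ?_) (le_of_eq (Finset.card_singleton c))
    intro y hy
    simp only [Finset.mem_filter, Finset.mem_insert, Finset.mem_singleton] at hy ⊢
    rcases hy.1 with h | h | h
    · exact absurd (h ▸ hy.2) (G.irrefl)
    · exact absurd (h ▸ hy.2) hab
    · exact h
  have hb : #((({a, b, c} : Finset V)).filter (G.Adj b)) ≤ 1 := by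
    refine le_trans (Finset.card_le_card ?_) (le_of_eq (Finset.card_singleton c))
    intro y hy
    simp only [Finset.mem_filter, Finset.mem_insert, Finset.mem_singleton] at hy ⊢
    rcases hy.1 with h | h | h
    · exact absurd (h ▸ hy.2) (fun hh => hab (G.adj_symm hh))
    · exact absurd (h ▸ hy.2) (G.irrefl)
    · exact h
  have hc : #((({a, b, c} : Finset V)).filter (G.Adj c)) ≤ 2 := by
    refine le_trans (Finset.card_le_card (s := _) (t := {a, b}) ?_) (Finset.card_insert_le a {b})
    intro y hy
    simp only [Finset.mem_filter, Finset.mem_insert, Finset.mem_singleton] at hy ⊢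
    rcases hy.1 with h | h | h
    · exact Or.inl h
    · exact Or.inr h
    · exact absurd (h ▸ hy.2) (G.irrefl)
  omega

lemma pc_card3 (U : Finset V) (htf : G.CliqueFree 3) (hU : U.card = 3) : pc G U ≤ 4 := by
  obtain ⟨a, b, c, hab, hac, hbc, rfl⟩ := Finset.card_eq_three.1 hU
  have hnc : ¬ (G.Adj a b ∧ G.Adj a c ∧ G.Adj b c) := by
    rintro ⟨h1, h2, h3⟩
    exact htf {a, b, c} (SimpleGraph.is3Clique_triple_iff.2 ⟨h1, h2, h3⟩)
  by_cases h1 : G.Adj a b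
  · by_cases h2 : G.Adj a c
    · have h3 : ¬ G.Adj b c := fun h => hnc ⟨h1, h2, h⟩
      have : ({a, b, c} : Finset V) = {b, c, a} := by
        ext x; simp only [Finset.mem_insert, Finset.mem_singleton]; tauto
      rw [this]; exact pc_triple G hbc (Ne.symm hab) (Ne.symm hac) h3
    · have : ({a, b, c} : Finset V) = {a, c, b} := by
        ext x; simp only [Finset.mem_insert, Finset.mem_singleton]; tauto
      rw [this]; exact pc_triple G hac hab (Ne.symm hbc) h2
  · exact pc_triple G hab hac hbc h1
lemma exists_split (U : Finset V) (hG : G.Fragile) (hU4 : 4 ≤ U.card)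
    (hdeg : ∀ x ∈ U, 3 ≤ #(U.filter (G.Adj x))) :
    ∃ U1 U2 : Finset V,
      (∀ a b, a ∈ U → b ∈ U → G.Adj a b → (a ∈ U1 ∧ b ∈ U1) ∨ (a ∈ U2 ∧ b ∈ U2)) ∧
      4 ≤ U1.card ∧ 4 ≤ U2.card ∧ U1.card < U.card ∧ U2.card < U.card ∧
      U1.card + U2.card ≤ U.card + 2 := by
  classical
  set Vt := ((⊤ : G.Subgraph).induce (↑U : Set V)).verts with hVt
  have hK := hG ((⊤ : G.Subgraph).induce (↑U : Set V))
  rw [SimpleGraph.IsKConnected] at hK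
  push_neg at hK
  have hcard : Nat.card ↥Vt = U.card := by
    rw [hVt, SimpleGraph.Subgraph.induce_verts, Nat.card_coe_set_eq, Set.ncard_coe_finset]
  obtain ⟨S, hS2, hnc⟩ := hK (by rw [← hVt]; omega)
  -- S : Set ↥((⊤ : G.Subgraph).induce ↑U).verts, hS2 : S.ncard ≤ 3 - 1
  set W := (((⊤ : G.Subgraph).induce (↑U : Set V)).coe.induce Sᶜ) with hW
  have hne : Nonempty ↥(Sᶜ) := by
    by_contra h
    have h1 : Sᶜ = ∅ := by
      rw [← Set.not_nonempty_iff_eq_empty]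
      exact fun hh => h (Set.nonempty_coe_sort.2 hh)
    have h2 : S = Set.univ := by
      rwa [Set.compl_empty_iff] at h1
    rw [h2, Set.ncard_univ, hcard] at hS2
    omega
  have hnp : ¬ W.Preconnected := fun h => hnc ((SimpleGraph.connected_iff W).mpr ⟨h, hne⟩)
  rw [SimpleGraph.Preconnected] at hnp
  push_neg at hnp
  obtain ⟨x0, y0, hxy⟩ := hnp
  set A : Finset V := U.filter (fun v =>
    ∃ (hv : v ∈ Vt) (hc : (⟨v, hv⟩ : ↥Vt) ∈ Sᶜ), W.Reachable x0 ⟨⟨v, hv⟩, hc⟩) with hA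
  set S' : Finset V := U.filter (fun v => ∃ u, u ∈ S ∧ (↑u : V) = v) with hS'
  have hmemVt : ∀ v : V, v ∈ U → v ∈ Vt := by
    intro v hv
    simp [hVt, SimpleGraph.Subgraph.induce_verts, hv]
  have hWadj : ∀ (a b : ↥(Sᶜ)), G.Adj ↑↑a ↑↑b → W.Adj a b := by
    intro a b hab
    show (((⊤ : G.Subgraph).induce (↑U : Set V)).coe.induce Sᶜ).Adj a b
    simp only [SimpleGraph.comap_adj, SimpleGraph.Subgraph.coe_adj,
      SimpleGraph.Subgraph.induce_adj, SimpleGraph.Subgraph.top_adj]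
    exact ⟨(↑a : ↥Vt).2, (↑b : ↥Vt).2, hab⟩
  have hnotS' : ∀ (v : V) (hv : v ∈ Vt), v ∉ S' → (⟨v, hv⟩ : ↥Vt) ∈ Sᶜ := by
    intro v hv hvS
    intro hmem
    exact hvS (Finset.mem_filter.2 ⟨by simpa [hVt] using hv, ⟨v, hv⟩, hmem, rfl⟩)
  have hAclosed : ∀ a b, a ∈ A → b ∈ U → b ∉ S' → G.Adj a b → b ∈ A := by
    intro a b ha hb hbS hadj
    obtain ⟨haU, hva, hca, hra⟩ := Finset.mem_filter.1 ha
    have hvb : b ∈ Vt := hmemVt b hb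
    have hcb : (⟨b, hvb⟩ : ↥Vt) ∈ Sᶜ := hnotS' b hvb hbS
    refine Finset.mem_filter.2 ⟨hb, hvb, hcb, hra.trans ?_⟩
    exact (hWadj ⟨⟨a, hva⟩, hca⟩ ⟨⟨b, hvb⟩, hcb⟩ hadj).reachable
  have hx0A : (↑↑x0 : V) ∈ A := by
    refine Finset.mem_filter.2 ⟨by simpa [hVt] using (↑x0 : ↥Vt).2, (↑x0 : ↥Vt).2, x0.2, ?_⟩
    exact SimpleGraph.Reachable.refl _
  have hy0S' : (↑↑y0 : V) ∉ S' := by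
    intro hmem
    obtain ⟨-, u, huS, hu⟩ := Finset.mem_filter.1 hmem
    have : u = ↑y0 := Subtype.ext hu
    exact y0.2 (this ▸ huS)
  have hy0A : (↑↑y0 : V) ∉ A := by
    intro hmem
    obtain ⟨-, hv, hc, hr⟩ := Finset.mem_filter.1 hmem
    exact hxy hr
  -- cardinality of S'
  have hS'card : S'.card ≤ 2 := by
    have hsub : (↑S' : Set V) ⊆ Subtype.val '' S := by
      intro v hv
      obtain ⟨-, u, huS, hu⟩ := Finset.mem_filter.1 hv
      exact ⟨u, huS, hu⟩
    calc S'.card = (↑S' : Set V).ncard := (Set.ncard_coe_finset _).symm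
      _ ≤ (Subtype.val '' S).ncard := Set.ncard_le_ncard hsub (Set.toFinite _)
      _ = S.ncard := Set.ncard_image_of_injective _ Subtype.val_injective
      _ ≤ 2 := by omega
  have hAU : A ⊆ U := Finset.filter_subset _ _
  have hS'U : S' ⊆ U := Finset.filter_subset _ _
  have hAS' : ∀ v ∈ A, v ∉ S' := by
    intro v hv hvS
    obtain ⟨-, hv', hc, -⟩ := Finset.mem_filter.1 hv
    obtain ⟨-, u, huS, hu⟩ := Finset.mem_filter.1 hvS
    have : u = ⟨v, hv'⟩ := Subtype.ext hu
    exact hc (this ▸ huS)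
  set B : Finset V := (U \ S') \ A with hB
  have hy0B : (↑↑y0 : V) ∈ B := by
    refine Finset.mem_sdiff.2 ⟨Finset.mem_sdiff.2 ⟨?_, hy0S'⟩, hy0A⟩
    simpa using (↑y0 : ↥Vt).2
  have hBU : B ⊆ U := fun v hv => (Finset.mem_sdiff.1 (Finset.mem_sdiff.1 hv).1).1
  have hBS' : ∀ v ∈ B, v ∉ S' := fun v hv => (Finset.mem_sdiff.1 (Finset.mem_sdiff.1 hv).1).2
  have hBA : ∀ v ∈ B, v ∉ A := fun v hv => (Finset.mem_sdiff.1 hv).2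
  set U1 : Finset V := A ∪ S' with hU1
  set U2 : Finset V := B ∪ S' with hU2
  have hUmem : ∀ v ∈ U, v ∈ S' ∨ v ∈ A ∨ v ∈ B := by
    intro v hv
    by_cases h1 : v ∈ S'
    · exact Or.inl h1
    by_cases h2 : v ∈ A
    · exact Or.inr (Or.inl h2)
    exact Or.inr (Or.inr (Finset.mem_sdiff.2 ⟨Finset.mem_sdiff.2 ⟨hv, h1⟩, h2⟩))
  have hUnion : U1 ∪ U2 = U := by
    apply Finset.Subset.antisymm
    · intro v hv
      rcases Finset.mem_union.1 hv with h | h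
      · rcases Finset.mem_union.1 h with h | h
        · exact hAU h
        · exact hS'U h
      · rcases Finset.mem_union.1 h with h | h
        · exact hBU h
        · exact hS'U h
    · intro v hv
      rcases hUmem v hv with h | h | h
      · exact Finset.mem_union.2 (Or.inl (Finset.mem_union.2 (Or.inr h)))
      · exact Finset.mem_union.2 (Or.inl (Finset.mem_union.2 (Or.inl h)))
      · exact Finset.mem_union.2 (Or.inr (Finset.mem_union.2 (Or.inl h)))
  have hInter : U1 ∩ U2 = S' := by
    apply Finset.Subset.antisymm
    · intro v hv
      obtain ⟨h1, h2⟩ := Finset.mem_inter.1 hv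
      rcases Finset.mem_union.1 h1 with h1 | h1
      · rcases Finset.mem_union.1 h2 with h2 | h2
        · exact absurd h1 (hBA v h2)
        · exact h2
      · exact h1
    · intro v hv
      exact Finset.mem_inter.2 ⟨Finset.mem_union.2 (Or.inr hv), Finset.mem_union.2 (Or.inr hv)⟩
  have hcardsum : U1.card + U2.card = U.card + S'.card := by
    rw [← Finset.card_union_add_card_inter, hUnion, hInter]
  have hdisj1 : Disjoint A S' := Finset.disjoint_left.2 (fun {v} hv => hAS' v hv)
  have hdisj2 : Disjoint B S' := Finset.disjoint_left.2 (fun {v} hv => hBS' v hv)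
  have hU1card : U1.card = A.card + S'.card := Finset.card_union_of_disjoint hdisj1
  have hU2card : U2.card = B.card + S'.card := Finset.card_union_of_disjoint hdisj2
  -- cover property
  have hcover : ∀ a b, a ∈ U → b ∈ U → G.Adj a b →
      (a ∈ U1 ∧ b ∈ U1) ∨ (a ∈ U2 ∧ b ∈ U2) := by
    intro a b ha hb hadj
    by_cases haS : a ∈ S'
    · rcases hUmem b hb with h | h | h
      · exact Or.inl ⟨Finset.mem_union.2 (Or.inr haS), Finset.mem_union.2 (Or.inr h)⟩
      · exact Or.inl ⟨Finset.mem_union.2 (Or.inr haS), Finset.mem_union.2 (Or.inl h)⟩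
      · exact Or.inr ⟨Finset.mem_union.2 (Or.inr haS), Finset.mem_union.2 (Or.inl h)⟩
    by_cases hbS : b ∈ S'
    · rcases hUmem a ha with h | h | h
      · exact absurd h haS
      · exact Or.inl ⟨Finset.mem_union.2 (Or.inl h), Finset.mem_union.2 (Or.inr hbS)⟩
      · exact Or.inr ⟨Finset.mem_union.2 (Or.inl h), Finset.mem_union.2 (Or.inr hbS)⟩
    by_cases haA : a ∈ A
    · have hbA : b ∈ A := hAclosed a b haA hb hbS hadj
      exact Or.inl ⟨Finset.mem_union.2 (Or.inl haA), Finset.mem_union.2 (Or.inl hbA)⟩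
    · have hbA : b ∉ A := fun hbA => haA (hAclosed b a hbA ha haS hadj.symm)
      have haB : a ∈ B := Finset.mem_sdiff.2 ⟨Finset.mem_sdiff.2 ⟨ha, haS⟩, haA⟩
      have hbB : b ∈ B := Finset.mem_sdiff.2 ⟨Finset.mem_sdiff.2 ⟨hb, hbS⟩, hbA⟩
      exact Or.inr ⟨Finset.mem_union.2 (Or.inl haB), Finset.mem_union.2 (Or.inl hbB)⟩
  -- size lower bounds
  have hx0U : (↑↑x0 : V) ∈ U := by simpa using (↑x0 : ↥Vt).2
  have hy0U : (↑↑y0 : V) ∈ U := by simpa using (↑y0 : ↥Vt).2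
  have hA4 : 4 ≤ A.card + S'.card := by
    have hsub : U.filter (G.Adj ↑↑x0) ⊆ (A.erase ↑↑x0) ∪ S' := by
      intro y hy
      obtain ⟨hyU, hadj⟩ := Finset.mem_filter.1 hy
      by_cases hyS : y ∈ S'
      · exact Finset.mem_union.2 (Or.inr hyS)
      · refine Finset.mem_union.2 (Or.inl (Finset.mem_erase.2 ⟨hadj.ne', ?_⟩))
        exact hAclosed _ y hx0A hyU hyS hadj
    have h1 := hdeg _ hx0U
    have h2 := Finset.card_le_card hsub
    have h3 := Finset.card_union_le (A.erase ↑↑x0) S'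
    have h4 : (A.erase ↑↑x0).card = A.card - 1 := Finset.card_erase_of_mem hx0A
    have h5 : 1 ≤ A.card := Finset.card_pos.2 ⟨_, hx0A⟩
    omega
  have hB4 : 4 ≤ B.card + S'.card := by
    have hsub : U.filter (G.Adj ↑↑y0) ⊆ (B.erase ↑↑y0) ∪ S' := by
      intro y hy
      obtain ⟨hyU, hadj⟩ := Finset.mem_filter.1 hy
      by_cases hyS : y ∈ S'
      · exact Finset.mem_union.2 (Or.inr hyS)
      · refine Finset.mem_union.2 (Or.inl (Finset.mem_erase.2 ⟨hadj.ne', ?_⟩))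
        have hyA : y ∉ A := fun hyA => hy0A (hAclosed y _ hyA hy0U hy0S' hadj.symm)
        exact Finset.mem_sdiff.2 ⟨Finset.mem_sdiff.2 ⟨hyU, hyS⟩, hyA⟩
    have h1 := hdeg _ hy0U
    have h2 := Finset.card_le_card hsub
    have h3 := Finset.card_union_le (B.erase ↑↑y0) S'
    have h4 : (B.erase ↑↑y0).card = B.card - 1 := Finset.card_erase_of_mem hy0B
    have h5 : 1 ≤ B.card := Finset.card_pos.2 ⟨_, hy0B⟩
    omega
  -- strict inclusions
  have hU1U : U1 ⊆ U := hUnion ▸ Finset.subset_union_left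
  have hU2U : U2 ⊆ U := hUnion ▸ Finset.subset_union_right
  have hU1lt : U1.card < U.card := by
    refine Finset.card_lt_card ((Finset.ssubset_iff_of_subset hU1U).2 ⟨↑↑y0, hy0U, ?_⟩)
    intro h
    rcases Finset.mem_union.1 h with h | h
    · exact hy0A h
    · exact hy0S' h
  have hU2lt : U2.card < U.card := by
    refine Finset.card_lt_card ((Finset.ssubset_iff_of_subset hU2U).2 ⟨↑↑x0, hx0U, ?_⟩)
    intro h
    rcases Finset.mem_union.1 h with h | h
    · exact hBA _ h hx0A
    · exact hAS' _ hx0A h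
  exact ⟨U1, U2, hcover, by omega, by omega, hU1lt, hU2lt, by omega⟩

lemma pc_bound (hG : G.Fragile) (htf : G.CliqueFree 3) :
    ∀ (n : ℕ) (U : Finset V), U.card ≤ n → 3 ≤ U.card → pc G U + 8 ≤ 4 * U.card := by
  intro n
  induction n with
  | zero => intro U h1 h2; omega
  | succ n ih =>
    intro U hUn hU3
    by_cases h3 : U.card = 3
    · have := pc_card3 G U htf h3; omega
    have hU4 : 4 ≤ U.card := by omega
    by_cases hdeg : ∃ x ∈ U, #(U.filter (G.Adj x)) ≤ 2
    · obtain ⟨x, hx, hdx⟩ := hdeg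
      have herase := pc_erase G U hx
      have hcard : (U.erase x).card = U.card - 1 := Finset.card_erase_of_mem hx
      have hih := ih (U.erase x) (by omega) (by omega)
      omega
    · push_neg at hdeg
      obtain ⟨U1, U2, hcover, h14, h24, h1lt, h2lt, hsum⟩ :=
        exists_split G U hG hU4 (fun x hx => hdeg x hx)
      have hs := pc_split G U U1 U2 hcover
      have h1 := ih U1 (by omega) (by omega)
      have h2 := ih U2 (by omega) (by omega)
      omega

end Aux

/-- Every fragile triangle-free graph on at least 3 vertices satisfies
`|E(G)| ≤ 2|V(G)| - 4`. -/
theorem statement10 {V : Type*} [Fintype V] (G : SimpleGraph V) [DecidableRel G.Adj]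
    (hG : G.Fragile) (htf : G.CliqueFree 3) (hV : 3 ≤ Fintype.card V) :
    G.edgeFinset.card ≤ 2 * Fintype.card V - 4 := by
  classical
  have hb := pc_bound G hG htf (Fintype.card V) Finset.univ
    (by simp) (by simpa [Finset.card_univ] using hV)
  have hpc := pc_univ G
  rw [Finset.card_univ] at hb
  omega
end

section
/- Every fragile finite simple graph with girth at least 4 (i.e., containing no cycle of length 3) and at least one vertex contains a vertex of degree at most 3. -/
section Auxiliary

open Set
universe u
variable {V : Type*}

lemma aux_img_edge_ncard (G : SimpleGraph V) (A : Set V) :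
    ((Sym2.map (Subtype.val : A → V)) '' (G.induce A).edgeSet).ncard
      = (G.induce A).edgeSet.ncard :=
  Set.ncard_image_of_injective _ (Sym2.map.injective Subtype.val_injective)

lemma aux_mem_img_edge {G : SimpleGraph V} {A : Set V} {x y : V}
    (hx : x ∈ A) (hy : y ∈ A) (h : G.Adj x y) :
    s(x, y) ∈ (Sym2.map (Subtype.val : A → V)) '' (G.induce A).edgeSet :=
  ⟨s((⟨x, hx⟩ : A), (⟨y, hy⟩ : A)), by simpa using h, by simp⟩

lemma aux_incident_ncard (G : SimpleGraph V) (u : V) :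
    ((fun x => s(u, x)) '' G.neighborSet u).ncard = (G.neighborSet u).ncard :=
  Set.ncard_image_of_injective _ (fun _ _ h => Sym2.congr_right.mp h)

lemma edge_count_sep [Finite V] (G : SimpleGraph V) (A B : Set V)
    (h : ∀ x y, G.Adj x y → (x ∈ A ∧ y ∈ A) ∨ (x ∈ B ∧ y ∈ B)) :
    G.edgeSet.ncard ≤ (G.induce A).edgeSet.ncard + (G.induce B).edgeSet.ncard := by
  have hsub : G.edgeSet ⊆
      ((Sym2.map (Subtype.val : A → V)) '' (G.induce A).edgeSet) ∪
      ((Sym2.map (Subtype.val : B → V)) '' (G.induce B).edgeSet) := by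
    intro e he
    induction e with
    | h x y =>
      rw [SimpleGraph.mem_edgeSet] at he
      rcases h x y he with ⟨hx, hy⟩ | ⟨hx, hy⟩
      · exact Or.inl (aux_mem_img_edge hx hy he)
      · exact Or.inr (aux_mem_img_edge hx hy he)
  calc G.edgeSet.ncard ≤ _ := Set.ncard_le_ncard hsub (Set.toFinite _)
    _ ≤ _ + _ := Set.ncard_union_le _ _
    _ = _ := by rw [aux_img_edge_ncard, aux_img_edge_ncard]

lemma edge_count_del1 [Finite V] (G : SimpleGraph V) (v : V) :
    G.edgeSet.ncard ≤ (G.induce {v}ᶜ).edgeSet.ncard + (G.neighborSet v).ncard := by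
  have hsub : G.edgeSet ⊆
      ((Sym2.map (Subtype.val : ({v}ᶜ : Set V) → V)) '' (G.induce {v}ᶜ).edgeSet) ∪
      ((fun x => s(v, x)) '' G.neighborSet v) := by
    intro e he
    induction e with
    | h x y =>
      rw [SimpleGraph.mem_edgeSet] at he
      by_cases hx : x = v
      · exact Or.inr ⟨y, by rwa [← hx], by rw [hx]⟩
      · by_cases hy : y = v
        · exact Or.inr ⟨x, by rw [← hy]; exact he.symm, by rw [hy, Sym2.eq_swap]⟩
        · exact Or.inl (aux_mem_img_edge (by simpa using hx) (by simpa using hy) he)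
  calc G.edgeSet.ncard ≤ _ := Set.ncard_le_ncard hsub (Set.toFinite _)
    _ ≤ _ + _ := Set.ncard_union_le _ _
    _ = _ := by rw [aux_img_edge_ncard, aux_incident_ncard]

lemma edge_count_del2 [Finite V] (G : SimpleGraph V) {u v : V} (huv : G.Adj u v) :
    G.edgeSet.ncard + 1 ≤ (G.induce {u, v}ᶜ).edgeSet.ncard
      + ((G.neighborSet u).ncard + (G.neighborSet v).ncard) := by
  set Iu := ((fun x => s(u, x)) '' G.neighborSet u) with hIu
  set Iv := ((fun x => s(v, x)) '' G.neighborSet v) with hIv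
  have hsub : G.edgeSet ⊆
      ((Sym2.map (Subtype.val : ({u, v}ᶜ : Set V) → V)) '' (G.induce {u, v}ᶜ).edgeSet) ∪
      (Iu ∪ Iv) := by
    intro e he
    induction e with
    | h x y =>
      rw [SimpleGraph.mem_edgeSet] at he
      by_cases hx : x = u
      · exact Or.inr (Or.inl ⟨y, by rwa [← hx], by rw [hx]⟩)
      · by_cases hy : y = u
        · exact Or.inr (Or.inl ⟨x, by rw [← hy]; exact he.symm, by rw [hy, Sym2.eq_swap]⟩)
        · by_cases hx2 : x = v
          · exact Or.inr (Or.inr ⟨y, by rwa [← hx2], by rw [hx2]⟩)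
          · by_cases hy2 : y = v
            · exact Or.inr (Or.inr ⟨x, by rw [← hy2]; exact he.symm, by rw [hy2, Sym2.eq_swap]⟩)
            · exact Or.inl (aux_mem_img_edge (by simp [hx, hx2]) (by simp [hy, hy2]) he)
  have h1 : G.edgeSet.ncard ≤
      (G.induce {u, v}ᶜ).edgeSet.ncard + (Iu ∪ Iv).ncard := by
    calc G.edgeSet.ncard ≤ _ := Set.ncard_le_ncard hsub (Set.toFinite _)
      _ ≤ _ + _ := Set.ncard_union_le _ _
      _ = _ := by rw [aux_img_edge_ncard]
  have h2 : (Iu ∪ Iv).ncard + (Iu ∩ Iv).ncard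
      = (G.neighborSet u).ncard + (G.neighborSet v).ncard := by
    rw [Set.ncard_union_add_ncard_inter _ _ (Set.toFinite _) (Set.toFinite _)]
    rw [hIu, hIv, aux_incident_ncard, aux_incident_ncard]
  have h3 : 1 ≤ (Iu ∩ Iv).ncard := by
    have : s(u, v) ∈ Iu ∩ Iv := by
      constructor
      · exact ⟨v, huv, rfl⟩
      · exact ⟨u, huv.symm, Sym2.eq_swap⟩
    exact (Set.ncard_pos (Set.toFinite _)).mpr ⟨_, this⟩
  omega

lemma mantel : ∀ (n : ℕ) (V : Type u) [Finite V] (G : SimpleGraph V),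
    Nat.card V = n → G.CliqueFree 3 → 4 * G.edgeSet.ncard ≤ n ^ 2 := by
  intro n
  induction n using Nat.strong_induction_on with
  | _ n IH =>
  intro V _ G hcard htf
  classical
  by_cases hne : G.edgeSet.Nonempty
  · obtain ⟨e, he⟩ := hne
    induction e with
    | h u v =>
      rw [SimpleGraph.mem_edgeSet] at he
      -- neighbor sets disjoint
      have hdisj : Disjoint (G.neighborSet u) (G.neighborSet v) := by
        rw [Set.disjoint_left]
        intro x hxu hxv
        exact htf {u, v, x} (SimpleGraph.is3Clique_triple_iff.mpr ⟨he, hxu, hxv⟩)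
      have hdeg : (G.neighborSet u).ncard + (G.neighborSet v).ncard ≤ n := by
        rw [← Set.ncard_union_eq hdisj (Set.toFinite _) (Set.toFinite _)]
        calc _ ≤ (Set.univ : Set V).ncard := Set.ncard_le_ncard (Set.subset_univ _) (Set.toFinite _)
          _ = n := by rw [Set.ncard_univ, hcard]
      have hpair : ({u, v} : Set V).ncard = 2 := Set.ncard_pair he.ne
      have hcompl : Nat.card ↥({u, v}ᶜ : Set V) = n - 2 := by
        rw [Nat.card_coe_set_eq]
        have := Set.ncard_add_ncard_compl ({u, v} : Set V) (Set.toFinite _) (Set.toFinite _)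
        rw [hpair, hcard] at this
        omega
      have hn2 : 2 ≤ n := by
        rw [← hcard, ← Set.ncard_univ, ← hpair]
        exact Set.ncard_le_ncard (Set.subset_univ _) (Set.toFinite _)
      have hIH := IH (n - 2) (by omega) ↥({u, v}ᶜ : Set V) (G.induce {u, v}ᶜ) hcompl
        (htf.comap (SimpleGraph.Embedding.induce _).isContained)
      have hcount := edge_count_del2 G he
      have hsq : (n - 2 + 2) ^ 2 = (n - 2) ^ 2 + 4 * (n - 2) + 4 := by ring
      have : n - 2 + 2 = n := by omega
      rw [this] at hsq
      omega
  · rw [Set.not_nonempty_iff_eq_empty] at hne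
    simp [hne]

lemma isKConnected_iso {V W : Type*} {G : SimpleGraph V} {H : SimpleGraph W} {k : ℕ}
    (e : G ≃g H) (h : G.IsKConnected k) : H.IsKConnected k := by
  obtain ⟨h1, h2⟩ := h
  constructor
  · have := Nat.card_congr e.toEquiv
    omega
  · intro S hS
    set T : Set V := e.toEquiv ⁻¹' S with hT
    have hTS : T = e.toEquiv.symm '' S := by
      ext x
      constructor
      · intro hx
        exact ⟨e.toEquiv x, hx, e.toEquiv.symm_apply_apply x⟩
      · rintro ⟨y, hy, rfl⟩
        show e.toEquiv (e.toEquiv.symm y) ∈ S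
        simpa using hy
    have hTn : T.ncard ≤ k - 1 := by
      rw [hTS, Set.ncard_image_of_injective _ e.toEquiv.symm.injective]
      exact hS
    have hconn := h2 T hTn
    have hmem : ∀ a : V, a ∈ Tᶜ ↔ e.toEquiv a ∈ Sᶜ := by
      intro a
      simp [hT]
    let φ : G.induce Tᶜ ≃g H.induce Sᶜ :=
      { toEquiv := e.toEquiv.subtypeEquiv hmem
        map_rel_iff' := by
          intro a b
          simp only [Equiv.subtypeEquiv_apply, SimpleGraph.comap_adj,
            Function.Embedding.coe_subtype]
          exact e.map_rel_iff }
    exact φ.connected_iff.mp hconn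

noncomputable def induceInduceIso {V : Type*} (G : SimpleGraph V) (A : Set V) (s : Set ↥A) :
    (G.induce A).induce s ≃g G.induce (Subtype.val '' s) where
  toEquiv := Equiv.Set.image Subtype.val s Subtype.val_injective
  map_rel_iff' := by
    intro a b
    simp [Equiv.Set.image, Equiv.Set.imageOfInjOn]

lemma key : ∀ (n : ℕ) (V : Type u) [Finite V] (G : SimpleGraph V),
    Nat.card V = n → G.CliqueFree 3 → 6 ≤ n → 2 * n ≤ G.edgeSet.ncard + 3 →
    ∃ s : Set V, (G.induce s).IsKConnected 3 := by
  intro n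
  induction n using Nat.strong_induction_on with
  | _ n IH =>
  intro V _ G hcard htf hn he
  classical
  by_cases hdeg : ∃ v : V, (G.neighborSet v).ncard ≤ 2
  · -- delete a vertex of degree ≤ 2
    obtain ⟨v, hv⟩ := hdeg
    have hvc : ({v} : Set V).ncard = 1 := Set.ncard_singleton v
    have hcompl : Nat.card ↥({v}ᶜ : Set V) = n - 1 := by
      rw [Nat.card_coe_set_eq]
      have := Set.ncard_add_ncard_compl ({v} : Set V) (Set.toFinite _) (Set.toFinite _)
      rw [hvc, hcard] at this
      omega
    have hcount := edge_count_del1 G v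
    by_cases h6 : 6 ≤ n - 1
    · have hIH := IH (n - 1) (by omega) ↥({v}ᶜ : Set V) (G.induce {v}ᶜ) hcompl
        (htf.comap (SimpleGraph.Embedding.induce _).isContained) h6 (by omega)
      obtain ⟨s, hs⟩ := hIH
      exact ⟨Subtype.val '' s, isKConnected_iso (induceInduceIso G _ s) hs⟩
    · -- n = 6 : contradiction via Mantel on 5 vertices
      exfalso
      have h5 : n - 1 = 5 := by omega
      have := mantel (n-1) ↥({v}ᶜ : Set V) (G.induce {v}ᶜ) hcompl
        (htf.comap (SimpleGraph.Embedding.induce _).isContained)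
      rw [h5] at this
      omega
  · push_neg at hdeg
    by_cases hno : ∃ s : Set V, (G.induce s).IsKConnected 3
    · exact hno
    exfalso
    have hconn : ¬ G.IsKConnected 3 := fun h =>
      hno ⟨Set.univ, isKConnected_iso (SimpleGraph.induceUnivIso G).symm h⟩
    rw [SimpleGraph.IsKConnected] at hconn
    push_neg at hconn
    obtain ⟨S, hS2, hSdis⟩ := hconn (by omega)
    -- S-complement is large and nonempty
    have hSc : (Sᶜ : Set V).ncard = n - S.ncard := by
      have := Set.ncard_add_ncard_compl S (Set.toFinite _) (Set.toFinite _)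
      omega
    have hScne : Nonempty ↥(Sᶜ : Set V) := by
      refine Set.Nonempty.to_subtype ?_
      rw [← Set.ncard_pos (Set.toFinite _)]
      omega
    haveI := hScne
    have hpre : ¬ (G.induce Sᶜ).Preconnected := fun h => hSdis ⟨h⟩
    unfold SimpleGraph.Preconnected at hpre
    push_neg at hpre
    obtain ⟨u, w, huw⟩ := hpre
    -- the reachable component of u
    set C : Set V := {x : V | ∃ hx : x ∈ (Sᶜ : Set V), (G.induce Sᶜ).Reachable u ⟨x, hx⟩} with hC
    have hCSc : C ⊆ (Sᶜ : Set V) := fun x hx => hx.1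
    have huC : (u : V) ∈ C := ⟨u.2, by rw [Subtype.coe_eta]⟩
    have hwC : (w : V) ∉ C := by
      rintro ⟨hx, hr⟩
      exact huw (by rwa [Subtype.coe_eta] at hr)
    have hclose : ∀ x y : V, G.Adj x y → x ∈ C → y ∉ S → y ∈ C := by
      intro x y hxy hxC hyS
      have hy : y ∈ (Sᶜ : Set V) := hyS
      obtain ⟨hx, hr⟩ := hxC
      refine ⟨hy, hr.trans (SimpleGraph.Adj.reachable ?_)⟩
      exact hxy
    set A : Set V := C ∪ S with hA
    set B : Set V := Cᶜ with hB
    have hsep : ∀ x y, G.Adj x y → (x ∈ A ∧ y ∈ A) ∨ (x ∈ B ∧ y ∈ B) := by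
      intro x y hxy
      by_cases hx : x ∈ C
      · by_cases hy : y ∈ C
        · exact Or.inl ⟨Or.inl hx, Or.inl hy⟩
        · by_cases hyS : y ∈ S
          · exact Or.inl ⟨Or.inl hx, Or.inr hyS⟩
          · exact absurd (hclose x y hxy hx hyS) hy
      · by_cases hy : y ∈ C
        · by_cases hxS : x ∈ S
          · exact Or.inl ⟨Or.inr hxS, Or.inl hy⟩
          · exact absurd (hclose y x hxy.symm hy hxS) hx
        · exact Or.inr ⟨hx, hy⟩
    have hsum : A.ncard + B.ncard = n + S.ncard := by
      have hU : A ∪ B = Set.univ := by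
        apply Set.eq_univ_of_univ_subset
        intro x _
        by_cases hx : x ∈ C
        · exact Or.inl (Or.inl hx)
        · exact Or.inr hx
      have hI : A ∩ B = S := by
        ext x
        constructor
        · rintro ⟨hx1 | hx2, hxB⟩
          · exact absurd hx1 hxB
          · exact hx2
        · intro hxS
          exact ⟨Or.inr hxS, fun hxC => (hCSc hxC) hxS⟩
      have := Set.ncard_union_add_ncard_inter A B (Set.toFinite _) (Set.toFinite _)
      rw [hU, hI, Set.ncard_univ, hcard] at this
      omega
    -- both sides have at least 4 vertices
    have hAcard : 4 ≤ A.ncard := by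
      have hsub : insert (u : V) (G.neighborSet u) ⊆ A := by
        intro x hx
        rcases Set.mem_insert_iff.mp hx with rfl | hx
        · exact Or.inl huC
        · by_cases hxS : x ∈ S
          · exact Or.inr hxS
          · exact Or.inl (hclose u x hx huC hxS)
      have h1 : (insert (u : V) (G.neighborSet (u : V))).ncard
          = (G.neighborSet (u : V)).ncard + 1 :=
        Set.ncard_insert_of_notMem (fun h => G.irrefl h) (Set.toFinite _)
      have h2 := Set.ncard_le_ncard hsub (Set.toFinite _)
      have h3 := hdeg (u : V)
      omega
    have hBcard : 4 ≤ B.ncard := by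
      have hsub : insert (w : V) (G.neighborSet w) ⊆ B := by
        intro x hx
        rcases Set.mem_insert_iff.mp hx with rfl | hx
        · exact hwC
        · intro hxC
          exact hwC (hclose x w ((SimpleGraph.mem_neighborSet _ _ _).mp hx).symm hxC w.2)
      have h1 : (insert (w : V) (G.neighborSet (w : V))).ncard
          = (G.neighborSet (w : V)).ncard + 1 :=
        Set.ncard_insert_of_notMem (fun h => G.irrefl h) (Set.toFinite _)
      have h2 := Set.ncard_le_ncard hsub (Set.toFinite _)
      have h3 := hdeg (w : V)
      omega
    -- both sides are proper
    have hAlt : A.ncard < n := by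
      have hAc : (w : V) ∈ Aᶜ := by
        rintro (hx | hx)
        · exact hwC hx
        · exact w.2 hx
      have := Set.ncard_add_ncard_compl A (Set.toFinite _) (Set.toFinite _)
      rw [hcard] at this
      have hpos : 0 < (Aᶜ : Set V).ncard := (Set.ncard_pos (Set.toFinite _)).mpr ⟨_, hAc⟩
      omega
    have hBlt : B.ncard < n := by
      have hBc : (u : V) ∈ Bᶜ := by
        simp only [hB, compl_compl]
        exact huC
      have := Set.ncard_add_ncard_compl B (Set.toFinite _) (Set.toFinite _)
      rw [hcard] at this
      have hpos : 0 < (Bᶜ : Set V).ncard := (Set.ncard_pos (Set.toFinite _)).mpr ⟨_, hBc⟩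
      omega
    -- if a side is big enough and dense enough, apply IH; this can't happen since we are
    have hside : ∀ X : Set V, X.ncard < n → 4 ≤ X.ncard →
        (¬ ∃ s : Set V, (G.induce s).IsKConnected 3) →
        (G.induce X).edgeSet.ncard + 4 ≤ 2 * X.ncard := by
      intro X hXlt hX4 hno
      by_cases hbig : 6 ≤ X.ncard ∧ 2 * X.ncard ≤ (G.induce X).edgeSet.ncard + 3
      · exfalso
        have hIH := IH X.ncard hXlt ↥X (G.induce X) (Nat.card_coe_set_eq X)
          (htf.comap (SimpleGraph.Embedding.induce _).isContained) hbig.1 hbig.2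
        obtain ⟨s, hs⟩ := hIH
        exact hno ⟨Subtype.val '' s, isKConnected_iso (induceInduceIso G _ s) hs⟩
      · push_neg at hbig
        by_cases h6 : 6 ≤ X.ncard
        · have := hbig h6
          omega
        · -- 4 ≤ |X| ≤ 5 : use Mantel
          have := mantel X.ncard ↥X (G.induce X) (Nat.card_coe_set_eq X)
            (htf.comap (SimpleGraph.Embedding.induce _).isContained)
          interval_cases h : X.ncard <;> omega
    have hA4 := hside A hAlt hAcard hno
    have hB4 := hside B hBlt hBcard hno
    have hcount := edge_count_sep G A B hsep
    omega


end Auxiliary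

/-- Every nonempty fragile triangle-free graph contains a vertex of degree at most 3. -/
theorem statement11 {V : Type*} [Fintype V] (G : SimpleGraph V) [DecidableRel G.Adj]
    (hG : G.Fragile) (htf : G.CliqueFree 3) (hV : Nonempty V) :
    ∃ v : V, G.degree v ≤ 3 := by
  classical
  by_contra hcon
  push_neg at hcon
  set n := Nat.card V with hn
  have hnf : Nat.card V = Fintype.card V := Nat.card_eq_fintype_card
  have hdegn : ∀ v : V, (G.neighborSet v).ncard = G.degree v := by
    intro v
    rw [← SimpleGraph.card_neighborSet_eq_degree, ← Nat.card_coe_set_eq,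
      Nat.card_eq_fintype_card]
  have hE : G.edgeSet.ncard = G.edgeFinset.card := by
    rw [← SimpleGraph.coe_edgeFinset, Set.ncard_coe_finset]
  have hsum : 4 * Fintype.card V ≤ 2 * G.edgeFinset.card := by
    rw [← SimpleGraph.sum_degrees_eq_twice_card_edges]
    calc 4 * Fintype.card V = ∑ _v : V, 4 := by
          rw [Finset.sum_const, Finset.card_univ, smul_eq_mul, mul_comm]
      _ ≤ ∑ v : V, G.degree v := Finset.sum_le_sum (fun v _ => hcon v)
  have h2n : 2 * n ≤ G.edgeSet.ncard := by
    rw [hE]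
    omega
  have hman := mantel n V G rfl htf
  have hn1 : 1 ≤ n := by
    rw [hn, hnf]
    exact Fintype.card_pos
  have h8n : 8 * n ≤ n * n := by
    have : n ^ 2 = n * n := sq n
    omega
  have hn8 : 8 ≤ n := Nat.le_of_mul_le_mul_right h8n (by omega)
  obtain ⟨s, hs⟩ := key n V G rfl htf (by omega) (by omega)
  set H : G.Subgraph :=
    { verts := s
      Adj := fun a b => a ∈ s ∧ b ∈ s ∧ G.Adj a b
      adj_sub := fun h => h.2.2
      edge_vert := fun h => h.1
      symm := ⟨fun a b h => ⟨h.2.1, h.1, h.2.2.symm⟩⟩ } with hH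
  have hcoe : H.coe = G.induce s := by
    ext ⟨a, ha⟩ ⟨b, hb⟩
    simp only [SimpleGraph.Subgraph.coe_adj, SimpleGraph.comap_adj,
      Function.Embedding.coe_subtype, hH]
    exact ⟨fun h => h.2.2, fun h => ⟨ha, hb, h⟩⟩
  exact hG H (by rw [hcoe]; exact hs)
end

section
/- A finite simple graph G with girth at least 4 (i.e., containing no cycle of length 3) is fragile if and only if every subgraph H of G either has at most 2 vertices or admits a cutset of size at most 2 that is an independent set (i.e., a set S of at most 2 pairwise non-adjacent vertices of H whose deletion disconnects H). -/
lemma walk_closed {X : Type*} {Γ : SimpleGraph X} {U : Set X}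
    (hU : ∀ ⦃u v⦄, Γ.Adj u v → u ∈ U → v ∈ U) :
    ∀ {x y : X}, Γ.Walk x y → x ∈ U → y ∈ U := by
  intro x y w
  induction w with
  | nil => exact id
  | cons h _ ih => exact fun hx => ih (hU h hx)

lemma not_connected_of_sep {X : Type*} {Γ : SimpleGraph X} {U : Set X}
    (hU : ∀ ⦃u v⦄, Γ.Adj u v → u ∈ U → v ∈ U) {x y : X} (hx : x ∈ U) (hy : y ∉ U) :
    ¬ Γ.Connected := fun h => hy ((h.preconnected x y).elim fun w => walk_closed hU w hx)

lemma exists_unreachable {X : Type*} {Γ : SimpleGraph X} (hne : Nonempty X) (h : ¬ Γ.Connected) :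
    ∃ x y : X, ¬ Γ.Reachable x y := by
  by_contra hc
  push_neg at hc
  exact h ((SimpleGraph.connected_iff _).mpr ⟨fun x y => hc x y, hne⟩)

lemma key_s12 {V : Type*} [Fintype V] {G : SimpleGraph V} (htf : G.CliqueFree 3)
    (hfrag : G.Fragile) :
    ∀ n (H : G.Subgraph), Nat.card H.verts ≤ n → Nat.card H.verts ≤ 2 ∨
      ∃ S : Set H.verts, S.ncard ≤ 2 ∧ (∀ a ∈ S, ∀ b ∈ S, ¬ H.coe.Adj a b) ∧
        ¬ (H.coe.induce Sᶜ).Connected := by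
  intro n
  induction n with
  | zero => intro H h; left; omega
  | succ n ih =>
    intro H hcard
    classical
    by_cases h2 : Nat.card H.verts ≤ 2
    · left; exact h2
    right
    by_cases h3 : Nat.card H.verts = 3
    -- case: exactly 3 vertices
    · -- find three vertices covering everything
      haveI : Fintype ↥H.verts := Fintype.ofFinite _
      rw [Nat.card_eq_fintype_card] at h3
      have h3' : (Finset.univ : Finset ↥H.verts).card = 3 := h3
      obtain ⟨p, q, r, hpq, hpr, hqr, huniv⟩ := Finset.card_eq_three.mp h3'
      have hall : ∀ x : ↥H.verts, x = p ∨ x = q ∨ x = r := by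
        intro x
        have hx := Finset.mem_univ x
        rw [huniv] at hx
        simpa using hx
      -- some pair among p q r is non-adjacent (triangle-freeness)
      have hnotall : ¬ (H.coe.Adj p q ∧ H.coe.Adj p r ∧ H.coe.Adj q r) := by
        rintro ⟨h1, hh2, hh3⟩
        exact htf {(↑p : V), ↑q, ↑r} (SimpleGraph.is3Clique_triple_iff.mpr
          ⟨H.coe_adj_sub _ _ h1, H.coe_adj_sub _ _ hh2, H.coe_adj_sub _ _ hh3⟩)
      obtain ⟨x, y, m, hxy, hxm, hym, hnadj, hall'⟩ :
          ∃ x y m : ↥H.verts, x ≠ y ∧ x ≠ m ∧ y ≠ m ∧ ¬ H.coe.Adj x y ∧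
            (∀ z, z = x ∨ z = y ∨ z = m) := by
        by_cases a1 : H.coe.Adj p q
        · by_cases a2 : H.coe.Adj p r
          · exact ⟨q, r, p, hqr, hpq.symm, hpr.symm, fun h => hnotall ⟨a1, a2, h⟩,
              fun z => by rcases hall z with h|h|h <;> tauto⟩
          · exact ⟨p, r, q, hpr, hpq, hqr.symm, a2, fun z => by rcases hall z with h|h|h <;> tauto⟩
        · exact ⟨p, q, r, hpq, hpr, hqr, a1, hall⟩
      refine ⟨{m}, by simp [Set.ncard_singleton], ?_, ?_⟩
      · rintro u hu v hv
        simp only [Set.mem_singleton_iff] at hu hv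
        subst hu; subst hv
        exact fun h => (H.coe.irrefl h)
      · have hx : x ∈ ({m}ᶜ : Set ↥H.verts) := by simpa using hxm
        have hy : y ∈ ({m}ᶜ : Set ↥H.verts) := by simpa using hym
        refine not_connected_of_sep (U := {w : ↥({m}ᶜ : Set ↥H.verts) | (w : ↥H.verts) = x})
          ?_ (x := ⟨x, hx⟩) (y := ⟨y, hy⟩) rfl (by simpa using hxy.symm)
        rintro u v huv hu
        have hadj : H.coe.Adj ↑u ↑v := huv
        rw [Set.mem_setOf_eq] at hu
        rw [hu] at hadj
        have hvm : (v : ↥H.verts) ≠ m := by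
          have := v.2
          simp only [Set.mem_compl_iff, Set.mem_singleton_iff] at this
          exact this
        have hvx : (v : ↥H.verts) ≠ x := fun h => H.coe.irrefl (h ▸ hadj)
        rcases hall' ↑v with h|h|h
        · exact absurd h hvx
        · exact absurd (h ▸ hadj) hnadj
        · exact absurd h hvm
    · -- main case: at least 4 vertices
      have h4 : 4 ≤ Nat.card ↥H.verts := by omega
      have hK := hfrag H
      rw [SimpleGraph.IsKConnected] at hK
      push_neg at hK
      obtain ⟨S, hS2, hSnc⟩ := hK (by omega)
      have hS2' : S.ncard ≤ 2 := by omega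
      by_cases hind : ∀ a ∈ S, ∀ b ∈ S, ¬ H.coe.Adj a b
      · exact ⟨S, hS2', hind, hSnc⟩
      push_neg at hind
      obtain ⟨a, ha, b, hb, hab⟩ := hind
      have habne : a ≠ b := hab.ne
      have hSab : ({a, b} : Set ↥H.verts) = S := by
        refine Set.eq_of_subset_of_ncard_le ?_ ?_ (Set.toFinite _)
        · rintro x (rfl | rfl)
          · exact ha
          · exact hb
        · rw [Set.ncard_pair habne]; exact hS2'
      rw [← hSab] at hSnc
      set W : Set ↥H.verts := {a, b} with hWdef
      have hWcne : (Wᶜ : Set ↥H.verts).Nonempty := by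
        rw [Set.nonempty_compl]
        intro h
        have h1 := Set.ncard_univ ↥H.verts
        rw [← h] at h1
        have h2' : W.ncard ≤ 2 := by rw [hWdef, Set.ncard_pair habne]
        omega
      obtain ⟨x₀, y₀, hxy⟩ := exists_unreachable hWcne.to_subtype hSnc
      set Δ₀ := H.coe.induce (Wᶜ : Set ↥H.verts) with hΔ₀
      set C : Set ↥(Wᶜ : Set ↥H.verts) := {z | Δ₀.Reachable x₀ z} with hCdef
      set sV : Set V :=
        ((fun z : ↥(Wᶜ : Set ↥H.verts) => ((z : ↥H.verts) : V)) '' C) ∪ {(↑a : V), ↑b}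
        with hsVdef
      have hsub : sV ⊆ H.verts := by
        rintro v (⟨z, _, rfl⟩ | hv)
        · exact (z : ↥H.verts).2
        · rcases hv with rfl | rfl
          · exact a.2
          · exact b.2
      set H1 : G.Subgraph := H.induce sV with hH1def
      have hH1v : H1.verts = sV := rfl
      have hx0sV : ((x₀ : ↥H.verts) : V) ∈ sV :=
        Or.inl ⟨x₀, SimpleGraph.Reachable.refl _, rfl⟩
      have hasV : ((a : ↥H.verts) : V) ∈ sV := Or.inr (Or.inl rfl)
      have hbsV : ((b : ↥H.verts) : V) ∈ sV := Or.inr (Or.inr rfl)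
      have habV : ((a : ↥H.verts) : V) ≠ ↑b := fun h => habne (Subtype.coe_injective h)
      have hx0a : ((x₀ : ↥H.verts) : V) ≠ ↑a := by
        intro h
        exact x₀.2 (Or.inl (Subtype.coe_injective h))
      have hx0b : ((x₀ : ↥H.verts) : V) ≠ ↑b := by
        intro h
        exact x₀.2 (Or.inr (Subtype.coe_injective h))
      have h3le : 3 ≤ Nat.card ↥H1.verts := by
        rw [Nat.card_coe_set_eq]
        have hsub3 : ({((x₀ : ↥H.verts) : V), ↑a, ↑b} : Set V) ⊆ sV := by
          rintro v (rfl | rfl | rfl)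
          · exact hx0sV
          · exact hasV
          · exact hbsV
        have hcard3 : ({((x₀ : ↥H.verts) : V), ↑a, ↑b} : Set V).ncard = 3 := by
          rw [Set.ncard_insert_of_notMem (by simp [hx0a, hx0b]), Set.ncard_pair habV]
        calc 3 = _ := hcard3.symm
          _ ≤ sV.ncard := Set.ncard_le_ncard hsub3 (Set.toFinite _)
      have hy0 : ((y₀ : ↥H.verts) : V) ∉ sV := by
        rintro (⟨z, hz, hzv⟩ | hv)
        · have hzy : z = y₀ :=
            Subtype.coe_injective (Subtype.coe_injective hzv)
          exact hxy (hzy ▸ hz)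
        · apply y₀.2
          rcases hv with h | h
          · exact Or.inl (Subtype.coe_injective h)
          · exact Or.inr (Subtype.coe_injective h)
      have hlt : Nat.card ↥H1.verts < Nat.card ↥H.verts := by
        rw [Nat.card_coe_set_eq, Nat.card_coe_set_eq]
        exact Set.ncard_lt_ncard
          ((Set.ssubset_iff_of_subset hsub).mpr ⟨↑y₀, (y₀ : ↥H.verts).2, hy0⟩)
          (Set.toFinite _)
      rcases ih H1 (by omega) with hc2 | ⟨T, hT2, hTind, hTnc⟩
      · omega
      set a₁ : ↥H1.verts := ⟨↑a, hasV⟩ with ha₁def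
      set b₁ : ↥H1.verts := ⟨↑b, hbsV⟩ with hb₁def
      have hHab : H.Adj ↑a ↑b := hab
      have hH1ab : H1.coe.Adj a₁ b₁ := ⟨hasV, hbsV, hHab⟩
      obtain ⟨c, d, hcdadj, hcT, hcdab⟩ :
          ∃ c d : ↥H1.verts, H1.coe.Adj c d ∧ c ∉ T ∧
            ({(↑c : V), ↑d} : Set V) = {↑a, ↑b} := by
        by_cases haT : a₁ ∈ T
        · exact ⟨b₁, a₁, hH1ab.symm, fun hbT => hTind a₁ haT b₁ hbT hH1ab,
            Set.pair_comm _ _⟩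
        · exact ⟨a₁, b₁, hH1ab, haT, rfl⟩
      set Δ := H1.coe.induce (Tᶜ : Set ↥H1.verts) with hΔdef
      obtain ⟨p₀, q₀, hpq0⟩ := exists_unreachable ⟨⟨c, hcT⟩⟩ hTnc
      obtain ⟨z, hzc⟩ :
          ∃ z : ↥(Tᶜ : Set ↥H1.verts), ¬ Δ.Reachable ⟨c, hcT⟩ z := by
        by_cases hp : Δ.Reachable ⟨c, hcT⟩ p₀
        · exact ⟨q₀, fun h => hpq0 (hp.symm.trans h)⟩
        · exact ⟨p₀, hp⟩
      set B : Set ↥(Tᶜ : Set ↥H1.verts) := {w | Δ.Reachable z w} with hBdef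
      have hzB : z ∈ B := SimpleGraph.Reachable.refl _
      have hcB : (⟨c, hcT⟩ : ↥(Tᶜ : Set ↥H1.verts)) ∉ B := fun h => hzc h.symm
      have hdB : ∀ hd : d ∉ T, (⟨d, hd⟩ : ↥(Tᶜ : Set ↥H1.verts)) ∉ B := by
        intro hd h
        apply hzc
        have hΔcd : Δ.Adj ⟨c, hcT⟩ ⟨d, hd⟩ := hcdadj
        exact hΔcd.reachable.trans h.symm
      set TV : Set V := (fun t : ↥H1.verts => (t : V)) '' T with hTVdef
      set Sf : Set ↥H.verts := {w | (w : V) ∈ TV} with hSfdef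
      have hSf2 : Sf.ncard ≤ 2 := by
        have himg : (fun w : ↥H.verts => (w : V)) '' Sf ⊆ TV := by
          rintro v ⟨w, hw, rfl⟩; exact hw
        calc Sf.ncard = ((fun w : ↥H.verts => (w : V)) '' Sf).ncard :=
              (Set.ncard_image_of_injective _ Subtype.coe_injective).symm
          _ ≤ TV.ncard := Set.ncard_le_ncard himg (Set.toFinite _)
          _ = T.ncard := Set.ncard_image_of_injective _ Subtype.coe_injective
          _ ≤ 2 := hT2
      have hSfind : ∀ p ∈ Sf, ∀ q ∈ Sf, ¬ H.coe.Adj p q := by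
        rintro p hp q hq hpq
        obtain ⟨tp, htp, htpv⟩ := hp
        obtain ⟨tq, htq, htqv⟩ := hq
        refine hTind tp htp tq htq ?_
        show H1.Adj ↑tp ↑tq
        refine ⟨tp.2, tq.2, ?_⟩
        rw [show (tp : V) = ↑p from htpv, show (tq : V) = ↑q from htqv]
        exact hpq
      -- the final cutset
      refine ⟨Sf, hSf2, hSfind, ?_⟩
      set BV : Set V :=
        (fun w : ↥(Tᶜ : Set ↥H1.verts) => ((w : ↥H1.verts) : V)) '' B with hBVdef
      have hnotTV : ∀ w : ↥(Tᶜ : Set ↥H1.verts), ((w : ↥H1.verts) : V) ∉ TV := by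
        rintro w ⟨t, ht, htv⟩
        exact w.2 ((Subtype.coe_injective htv) ▸ ht)
      have hzH : ((z : ↥H1.verts) : V) ∈ H.verts := hsub (z : ↥H1.verts).2
      have hzSf : (⟨↑↑z, hzH⟩ : ↥H.verts) ∈ Sfᶜ := hnotTV z
      have hcH : ((c : ↥H1.verts) : V) ∈ H.verts := hsub c.2
      have hcSf : (⟨↑c, hcH⟩ : ↥H.verts) ∈ Sfᶜ := by
        rintro ⟨t, ht, htv⟩
        exact hcT ((Subtype.coe_injective htv) ▸ ht)
      refine not_connected_of_sep
        (U := {w : ↥(Sfᶜ : Set ↥H.verts) | ((w : ↥H.verts) : V) ∈ BV}) ?_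
        (x := ⟨⟨↑↑z, hzH⟩, hzSf⟩) (y := ⟨⟨↑c, hcH⟩, hcSf⟩) ⟨z, hzB, rfl⟩ ?_
      · -- closedness of BV inside the graph H minus Sf
        rintro u v huv hu
        obtain ⟨β, hβB, hβv⟩ := hu
        have hβv' : ((β : ↥H1.verts) : V) = ((u : ↥H.verts) : V) := hβv
        have hadjH : H.Adj ((u : ↥H.verts) : V) ((v : ↥H.verts) : V) := huv
        -- u is not a or b
        have huc : ((u : ↥H.verts) : V) ≠ ↑c := by
          intro h
          have hβc : (β : ↥H1.verts) = c := Subtype.coe_injective (hβv'.trans h)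
          have : β = ⟨c, hcT⟩ :=
            Subtype.ext (show (β : ↥H1.verts) = ↑(⟨c, hcT⟩ : ↥(Tᶜ : Set ↥H1.verts)) from hβc)
          exact hcB (this ▸ hβB)
        have hud : ((u : ↥H.verts) : V) ≠ ↑d := by
          intro h
          have hβd : (β : ↥H1.verts) = d := Subtype.coe_injective (hβv'.trans h)
          have hdT : d ∉ T := hβd ▸ β.2
          have : β = ⟨d, hdT⟩ :=
            Subtype.ext (show (β : ↥H1.verts) = ↑(⟨d, hdT⟩ : ↥(Tᶜ : Set ↥H1.verts)) from hβd)
          exact hdB hdT (this ▸ hβB)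
        have huab : ((u : ↥H.verts) : V) ≠ ↑a ∧ ((u : ↥H.verts) : V) ≠ ↑b := by
          constructor
          · intro h
            have : ((a : ↥H.verts) : V) ∈ ({(↑c : V), ↑d} : Set V) := by
              rw [hcdab]; exact Or.inl rfl
            rcases this with h' | h'
            · exact huc (h.trans h')
            · exact hud (h.trans h')
          · intro h
            have : ((b : ↥H.verts) : V) ∈ ({(↑c : V), ↑d} : Set V) := by
              rw [hcdab]; exact Or.inr rfl
            rcases this with h' | h'
            · exact huc (h.trans h')
            · exact hud (h.trans h')
        -- hence u comes from C
        have huC : ∃ γ ∈ C, ((γ : ↥H.verts) : V) = ((u : ↥H.verts) : V) := by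
          have hβs : ((β : ↥H1.verts) : V) ∈ sV := (β : ↥H1.verts).2
          rcases hβs with ⟨γ, hγ, hγv⟩ | hv'
          · exact ⟨γ, hγ, hγv.trans hβv'⟩
          · exfalso
            rcases hv' with h | h
            · exact huab.1 (hβv'.symm.trans h)
            · exact huab.2 (hβv'.symm.trans h)
        obtain ⟨γ, hγC, hγu⟩ := huC
        -- v is in sV
        have hvT : ((v : ↥H.verts) : V) ∉ TV := v.2
        have hvsV : ((v : ↥H.verts) : V) ∈ sV := by
          by_cases hva : ((v : ↥H.verts) : V) = ↑a
          · rw [hva]; exact hasV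
          by_cases hvb : ((v : ↥H.verts) : V) = ↑b
          · rw [hvb]; exact hbsV
          -- v avoids a,b, so v is adjacent into the component C
          have hvW : ((v : ↥H.verts) : ↥H.verts) ∈ (Wᶜ : Set ↥H.verts) := by
            rintro (h | h)
            · exact hva (congrArg _ h)
            · exact hvb (congrArg _ h)
          have hγu' : (γ : ↥H.verts) = (u : ↥H.verts) := Subtype.coe_injective hγu
          have hadj₀ : Δ₀.Adj γ ⟨↑v, hvW⟩ := by
            show H.coe.Adj ↑γ (↑v : ↥H.verts)
            show H.Adj ((γ : ↥H.verts) : V) _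
            rw [hγu']
            exact hadjH
          have : (⟨↑v, hvW⟩ : ↥(Wᶜ : Set ↥H.verts)) ∈ C := hγC.trans hadj₀.reachable
          exact Or.inl ⟨_, this, rfl⟩
        set v₁ : ↥H1.verts := ⟨↑↑v, hvsV⟩ with hv₁def
        have hv₁T : v₁ ∉ T := fun h => hvT ⟨v₁, h, rfl⟩
        have hβTc := β.2
        have hadjΔ : Δ.Adj β ⟨v₁, hv₁T⟩ := by
          show H1.coe.Adj ↑β v₁
          show H1.Adj ((β : ↥H1.verts) : V) ((v : ↥H.verts) : V)
          refine ⟨(β : ↥H1.verts).2, hvsV, ?_⟩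
          rw [hβv']
          exact hadjH
        exact ⟨⟨v₁, hv₁T⟩, hβB.trans hadjΔ.reachable, rfl⟩
      · -- c is not in BV
        rintro ⟨w, hwB, hwv⟩
        have hwc : w = ⟨c, hcT⟩ :=
          Subtype.coe_injective (Subtype.coe_injective hwv)
        exact hcB (hwc ▸ hwB)

/-- A triangle-free graph is fragile iff every subgraph either has at most 2 vertices or
admits an independent cutset of size at most 2. -/
theorem statement12 {V : Type*} [Fintype V] (G : SimpleGraph V) (htf : G.CliqueFree 3) :
    G.Fragile ↔ ∀ H : G.Subgraph, Nat.card H.verts ≤ 2 ∨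
      ∃ S : Set H.verts, S.ncard ≤ 2 ∧ (∀ a ∈ S, ∀ b ∈ S, ¬ H.coe.Adj a b) ∧
        ¬ (H.coe.induce Sᶜ).Connected := by
  constructor
  · intro hfrag H
    exact key_s12 htf hfrag (Nat.card H.verts) H le_rfl
  · intro h H hK
    obtain ⟨h4, hcut⟩ := hK
    rcases h H with h2 | ⟨S, hS2, _, hnc⟩
    · omega
    · exact hnc (hcut S (by omega))
end

section
/- For every finite simple graph G, the graph G′ obtained from G by subdividing every edge twice (replacing each edge uv by a path u–x_{uv}–y_{uv}–v through two new vertices) is fragile. -/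
/-- The relation generating the double subdivision of `G`: each edge `uv` of `G` is
replaced by a path `u — (u,v) — (v,u) — v`, where the darts `(u,v)` and `(v,u)` are the
two new vertices `x_{uv}` and `y_{uv}` subdividing the edge `uv` twice. -/
def SimpleGraph.doubleSubdivisionRel {V : Type*} (G : SimpleGraph V) :
    (V ⊕ G.Dart) → (V ⊕ G.Dart) → Prop
  | Sum.inl u, Sum.inr d => d.toProd.1 = u
  | Sum.inr d, Sum.inr d' => d' = d.symm
  | _, _ => False

/-- The graph obtained from `G` by subdividing every edge twice. -/
def SimpleGraph.doubleSubdivision {V : Type*} (G : SimpleGraph V) :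
    SimpleGraph (V ⊕ G.Dart) :=
  SimpleGraph.fromRel G.doubleSubdivisionRel

lemma aux_exists_adj {A : Type*} {G : SimpleGraph A} (h : G.Connected)
    {a b : A} (hab : a ≠ b) : ∃ u v, G.Adj u v := by
  obtain ⟨w⟩ := h.preconnected a b
  cases w with
  | nil => exact absurd rfl hab
  | cons h p => exact ⟨_, _, h⟩

lemma aux_nbr {V : Type*} {G : SimpleGraph V} {d : G.Dart} {c : V ⊕ G.Dart}
    (h : G.doubleSubdivision.Adj (Sum.inr d) c) :
    c = Sum.inl d.toProd.1 ∨ c = Sum.inr d.symm := by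
  rw [SimpleGraph.doubleSubdivision, SimpleGraph.fromRel_adj] at h
  obtain ⟨-, h | h⟩ := h
  · cases c with
    | inl u => exact h.elim
    | inr d' => exact Or.inr (by rw [h])
  · cases c with
    | inl u => exact Or.inl (by simp [SimpleGraph.doubleSubdivisionRel] at h; rw [h])
    | inr d' =>
      refine Or.inr ?_
      have : d = d'.symm := h
      rw [this, SimpleGraph.Dart.symm_symm]

lemma aux_rel {V : Type*} {G : SimpleGraph V} {u v : V ⊕ G.Dart}
    (h : G.doubleSubdivision.Adj u v) :
    G.doubleSubdivisionRel u v ∨ G.doubleSubdivisionRel v u := by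
  rw [SimpleGraph.doubleSubdivision, SimpleGraph.fromRel_adj] at h
  exact h.2

/-- The double subdivision of any finite graph is fragile. -/
theorem statement13 {V : Type*} [Fintype V] (G : SimpleGraph V) :
    G.doubleSubdivision.Fragile := by
  intro H h
  obtain ⟨hcard, hconn⟩ := h
  haveI : Finite G.Dart :=
    Finite.of_injective (fun d => d.toProd) (fun a b hab => SimpleGraph.Dart.ext a b hab)
  haveI : Finite ↥H.verts := Subtype.finite
  -- find a dart vertex in H.verts
  have hnt : Nontrivial ↥H.verts := by
    rw [← Finite.one_lt_card_iff_nontrivial]; omega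
  obtain ⟨a, b, hab⟩ := hnt
  have hconn0 := hconn ∅ (by simp)
  have ha : a ∈ (∅ : Set ↥H.verts)ᶜ := by simp
  have hb : b ∈ (∅ : Set ↥H.verts)ᶜ := by simp
  have hab' : (⟨a, ha⟩ : ↥(∅ : Set ↥H.verts)ᶜ) ≠ ⟨b, hb⟩ := by
    simp [Subtype.ext_iff, hab]
  obtain ⟨u, v, huv⟩ := aux_exists_adj hconn0 hab'
  have hHuv : H.Adj u.val.val v.val.val := huv
  have hGuv := H.adj_sub hHuv
  have hd : ∃ d : G.Dart, Sum.inr d ∈ H.verts := by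
    rcases aux_rel hGuv with hrel | hrel
    · match hu : u.val.val, hv : v.val.val, hrel with
      | Sum.inl _, Sum.inr d, _ => exact ⟨d, hv ▸ hHuv.snd_mem⟩
      | Sum.inr d, _, _ => exact ⟨d, hu ▸ hHuv.fst_mem⟩
    · match hu : u.val.val, hv : v.val.val, hrel with
      | Sum.inr d, _, _ => exact ⟨d, hu ▸ hHuv.fst_mem⟩
      | Sum.inl _, Sum.inr d, _ => exact ⟨d, hv ▸ hHuv.snd_mem⟩
  obtain ⟨d, hd⟩ := hd
  -- the cut set
  set S : Set ↥H.verts :=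
    {z | z.val = Sum.inl d.toProd.1 ∨ z.val = Sum.inr d.symm} with hS
  have hS2 : S.ncard ≤ 2 := by
    have himg : Subtype.val '' S ⊆ {Sum.inl d.toProd.1, Sum.inr d.symm} := by
      rintro z ⟨w, hw, rfl⟩
      rcases hw with h | h <;> simp [h]
    calc S.ncard = (Subtype.val '' S).ncard :=
          (Set.ncard_image_of_injective S Subtype.val_injective).symm
      _ ≤ ({Sum.inl d.toProd.1, Sum.inr d.symm} : Set (V ⊕ G.Dart)).ncard :=
          Set.ncard_le_ncard himg (Set.toFinite _)
      _ ≤ 2 := by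
          refine le_trans (Set.ncard_insert_le _ _) ?_
          simp
  have hxS : (⟨Sum.inr d, hd⟩ : ↥H.verts) ∉ S := by
    rintro (h | h)
    · simp at h
    · simp only [Sum.inr.injEq] at h
      exact d.symm_ne h.symm
  -- find another vertex outside S ∪ {x}
  have hT : insert (⟨Sum.inr d, hd⟩ : ↥H.verts) S ≠ Set.univ := by
    intro hEq
    have h1 : (insert (⟨Sum.inr d, hd⟩ : ↥H.verts) S).ncard ≤ 3 :=
      le_trans (Set.ncard_insert_le _ _) (by omega)
    rw [hEq, Set.ncard_univ] at h1
    omega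
  obtain ⟨y, hy⟩ := (Set.ne_univ_iff_exists_notMem _).mp hT
  have hyS : y ∉ S := fun h => hy (Set.mem_insert_of_mem _ h)
  have hyx : y ≠ ⟨Sum.inr d, hd⟩ := fun h => hy (h ▸ Set.mem_insert _ _)
  -- connectivity after deleting S
  have hconnS := hconn S (by omega)
  have hxS' : (⟨Sum.inr d, hd⟩ : ↥H.verts) ∈ Sᶜ := hxS
  have hyS' : y ∈ Sᶜ := hyS
  have hne : (⟨⟨Sum.inr d, hd⟩, hxS'⟩ : ↥(Sᶜ)) ≠ ⟨y, hyS'⟩ := by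
    exact fun h => hyx (congrArg Subtype.val h).symm
  obtain ⟨w⟩ := hconnS.preconnected ⟨⟨Sum.inr d, hd⟩, hxS'⟩ ⟨y, hyS'⟩
  cases w with
  | nil => exact hne rfl
  | cons hadj p =>
    rename_i c
    have hc : H.Adj (Sum.inr d) c.val.val := hadj
    have := aux_nbr (H.adj_sub hc)
    have hcS : c.val ∈ S := by
      rcases this with h | h <;> [exact Or.inl h; exact Or.inr h]
    exact c.prop hcS
end

section
/- For every finite simple graph G, if G′ is the graph obtained from G by subdividing every edge twice (replacing each edge uv by a path u–x_{uv}–y_{uv}–v through two new vertices), then the independence number of G′ equals the independence number of G plus the number of edges of G, i.e., α(G′) = α(G) + |E(G)|. -/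
/-- The independence number of a graph: the maximum size of a set of pairwise
non-adjacent vertices. -/
noncomputable def SimpleGraph.indepNumSSup {V : Type*} (G : SimpleGraph V) : ℕ :=
  sSup {n | ∃ s : Set V, s.ncard = n ∧ s.Pairwise fun a b => ¬ G.Adj a b}

namespace SubdivProof

open SimpleGraph

variable {V : Type*} {G : SimpleGraph V}

lemma adj_inl_inl (u v : V) :
    ¬ G.doubleSubdivision.Adj (Sum.inl u) (Sum.inl v) := by
  simp [doubleSubdivision, doubleSubdivisionRel, fromRel_adj]

lemma adj_inl_inr (u : V) (d : G.Dart) :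
    G.doubleSubdivision.Adj (Sum.inl u) (Sum.inr d) ↔ d.toProd.1 = u := by
  simp [doubleSubdivision, doubleSubdivisionRel, fromRel_adj]

lemma adj_inr_inr (d d' : G.Dart) :
    G.doubleSubdivision.Adj (Sum.inr d) (Sum.inr d') ↔ d' = d.symm := by
  simp only [doubleSubdivision, doubleSubdivisionRel, fromRel_adj, ne_eq, Sum.inr.injEq]
  constructor
  · rintro ⟨h1, h2 | h2⟩
    · exact h2
    · rw [h2, SimpleGraph.Dart.symm_symm]
  · rintro rfl
    exact ⟨(SimpleGraph.Dart.symm_ne d).symm, Or.inl rfl⟩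

/-- The set of cardinalities of independent sets. -/
def indepSet (G : SimpleGraph V) : Set ℕ :=
  {n | ∃ s : Set V, s.ncard = n ∧ s.Pairwise fun a b => ¬ G.Adj a b}

lemma indepNum_eq (G : SimpleGraph V) : G.indepNumSSup = sSup (indepSet G) := rfl

lemma indepSet_nonempty (G : SimpleGraph V) : (indepSet G).Nonempty :=
  ⟨0, ∅, by simp, Set.pairwise_empty _⟩

lemma indepSet_bddAbove [Finite V] (G : SimpleGraph V) : BddAbove (indepSet G) := by
  refine ⟨Nat.card V, ?_⟩
  rintro n ⟨s, rfl, -⟩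
  simpa [Set.ncard_univ] using Set.ncard_le_ncard (Set.subset_univ s) Set.finite_univ

lemma le_indepNum [Finite V] (G : SimpleGraph V) {s : Set V}
    (hs : s.Pairwise fun a b => ¬ G.Adj a b) : s.ncard ≤ G.indepNumSSup :=
  le_csSup (indepSet_bddAbove G) ⟨s, rfl, hs⟩

lemma exists_indepNum_set [Finite V] (G : SimpleGraph V) :
    ∃ s : Set V, s.ncard = G.indepNumSSup ∧ s.Pairwise fun a b => ¬ G.Adj a b :=
  Nat.sSup_mem (indepSet_nonempty G) (indepSet_bddAbove G)

/-- Any set `A` contains an independent set of size at least `|A|` minus the number of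
edges inside `A`. -/
lemma exists_indep_subset [Finite V] (G : SimpleGraph V) :
    ∀ (n : ℕ) (A : Set V), {e | e ∈ G.edgeSet ∧ ∀ x ∈ e, x ∈ A}.ncard = n →
    ∃ B ⊆ A, (B.Pairwise fun a b => ¬ G.Adj a b) ∧ A.ncard ≤ B.ncard + n := by
  intro n
  induction n using Nat.strong_induction_on with
  | _ n ih =>
    intro A hA
    by_cases h : A.Pairwise fun a b => ¬ G.Adj a b
    · exact ⟨A, subset_rfl, h, Nat.le_add_right _ _⟩
    · rw [Set.Pairwise] at h
      push_neg at h
      obtain ⟨u, hu, v, hv, hne, hadj⟩ := h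
      set A' := A \ {u} with hA'
      set m := {e | e ∈ G.edgeSet ∧ ∀ x ∈ e, x ∈ A'}.ncard with hm
      have hsub : {e | e ∈ G.edgeSet ∧ ∀ x ∈ e, x ∈ A'}
          ⊂ {e | e ∈ G.edgeSet ∧ ∀ x ∈ e, x ∈ A} := by
        constructor
        · rintro e ⟨he, hmem⟩
          exact ⟨he, fun x hx => (hmem x hx).1⟩
        · intro hcon
          have hmem : s(u, v) ∈ {e | e ∈ G.edgeSet ∧ ∀ x ∈ e, x ∈ A} := by
            refine ⟨hadj, fun x hx => ?_⟩
            rcases Sym2.mem_iff.mp hx with rfl | rfl <;> assumption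
          exact ((hcon hmem).2 u (Sym2.mem_mk_left u v)).2 rfl
      have hlt : m < n := hA ▸ Set.ncard_lt_ncard hsub (Set.toFinite _)
      obtain ⟨B, hBA, hBp, hcard⟩ := ih m hlt A' rfl
      refine ⟨B, hBA.trans Set.diff_subset, hBp, ?_⟩
      have hAcard : A'.ncard + 1 = A.ncard :=
        Set.ncard_diff_singleton_add_one hu (Set.toFinite A)
      omega

end SubdivProof

/-- Poljak: `α(G') = α(G) + |E(G)|` where `G'` is the double subdivision of `G`. -/
theorem statement14 {V : Type*} [Fintype V] (G : SimpleGraph V) [DecidableRel G.Adj] :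
    G.doubleSubdivision.indepNumSSup = G.indepNumSSup + G.edgeFinset.card := by
  classical
  open SubdivProof SimpleGraph in
  have hE : G.edgeSet.ncard = G.edgeFinset.card := by
    simp [Set.ncard_eq_toFinset_card', edgeFinset]
  refine le_antisymm ?le ?ge
  case ge =>
    obtain ⟨s₀, hs₀card, hs₀⟩ := exists_indepNum_set G
    let f := Fintype.equivFin V
    set D : Set G.Dart :=
      {d | d.toProd.1 ∉ s₀ ∧ (d.toProd.2 ∈ s₀ ∨ f d.toProd.1 < f d.toProd.2)} with hD
    have hDsymm : ∀ d ∈ D, d.symm ∉ D := by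
      rintro d ⟨h1, h2⟩ ⟨h1', h2'⟩
      simp only [Dart.symm_toProd, Prod.fst_swap, Prod.snd_swap] at h1' h2'
      rcases h2 with h2 | h2
      · exact h1' h2
      · rcases h2' with h2' | h2'
        · exact h1 h2'
        · exact absurd h2 (not_lt.mpr h2'.le)
    have hinj : Set.InjOn SimpleGraph.Dart.edge D := by
      intro d hd d' hd' he
      rcases (SimpleGraph.dart_edge_eq_iff d d').mp he with h | h
      · exact h
      · exact absurd (h ▸ hd) (hDsymm d' hd')
    have himg : SimpleGraph.Dart.edge '' D = G.edgeSet := by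
      apply Set.Subset.antisymm
      · rintro _ ⟨d, -, rfl⟩
        exact d.edge_mem
      · intro e he
        induction e with
        | _ u v =>
          rw [SimpleGraph.mem_edgeSet] at he
          by_cases hu : u ∈ s₀
          · have hv : v ∉ s₀ := fun hv => hs₀ hu hv he.ne he
            exact ⟨⟨(v, u), he.symm⟩, ⟨hv, Or.inl hu⟩, Sym2.eq_swap⟩
          · by_cases hv : v ∈ s₀
            · exact ⟨⟨(u, v), he⟩, ⟨hu, Or.inl hv⟩, rfl⟩
            · rcases lt_or_gt_of_ne (fun h : f u = f v => he.ne (f.injective h)) with hlt | hlt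
              · exact ⟨⟨(u, v), he⟩, ⟨hu, Or.inr hlt⟩, rfl⟩
              · exact ⟨⟨(v, u), he.symm⟩, ⟨hv, Or.inr hlt⟩, Sym2.eq_swap⟩
    have hDcard : D.ncard = G.edgeFinset.card := by
      rw [← Set.ncard_image_of_injOn hinj, himg, hE]
    set T : Set (V ⊕ G.Dart) := Sum.inl '' s₀ ∪ Sum.inr '' D with hT
    have hTp : T.Pairwise fun a b => ¬ G.doubleSubdivision.Adj a b := by
      rintro x (⟨u, hu, rfl⟩ | ⟨d, hd, rfl⟩) y (⟨v, hv, rfl⟩ | ⟨d', hd', rfl⟩) hne hadj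
      · exact adj_inl_inl u v hadj
      · have h := (adj_inl_inr u d').mp hadj
        exact hd'.1 (h ▸ hu)
      · have h := (adj_inl_inr v d).mp hadj.symm
        exact hd.1 (h ▸ hv)
      · have h := (adj_inr_inr d d').mp hadj
        exact hDsymm d hd (h ▸ hd')
    have hdisj : Disjoint (Sum.inl '' s₀) (Sum.inr '' D : Set (V ⊕ G.Dart)) := by
      rw [Set.disjoint_left]
      rintro _ ⟨u, -, rfl⟩ ⟨d, -, h⟩
      exact Sum.inl_ne_inr h.symm
    have hTcard : T.ncard = G.indepNumSSup + G.edgeFinset.card := by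
      rw [hT, Set.ncard_union_eq hdisj (Set.toFinite _) (Set.toFinite _),
        Set.ncard_image_of_injective _ Sum.inl_injective,
        Set.ncard_image_of_injective _ Sum.inr_injective, hs₀card, hDcard]
    exact hTcard ▸ le_indepNum G.doubleSubdivision hTp
  case le =>
    refine csSup_le (indepSet_nonempty _) ?_
    rintro n ⟨T, rfl, hT⟩
    set A : Set V := Sum.inl ⁻¹' T with hA
    set D : Set G.Dart := Sum.inr ⁻¹' T with hDdef
    have hTeq : T = Sum.inl '' A ∪ Sum.inr '' D := by
      ext x
      cases x <;> simp [hA, hDdef]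
    have hdisj : Disjoint (Sum.inl '' A) (Sum.inr '' D : Set (V ⊕ G.Dart)) := by
      rw [Set.disjoint_left]
      rintro _ ⟨u, -, rfl⟩ ⟨d, -, h⟩
      exact Sum.inl_ne_inr h.symm
    have hTcard : T.ncard = A.ncard + D.ncard := by
      rw [hTeq, Set.ncard_union_eq hdisj (Set.toFinite _) (Set.toFinite _),
        Set.ncard_image_of_injective _ Sum.inl_injective,
        Set.ncard_image_of_injective _ Sum.inr_injective]
    set EA := {e | e ∈ G.edgeSet ∧ ∀ x ∈ e, x ∈ A} with hEA
    obtain ⟨B, hBA, hBp, hBcard⟩ := exists_indep_subset G EA.ncard A rfl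
    have hα : B.ncard ≤ G.indepNumSSup := le_indepNum G hBp
    have hDsymm : ∀ d ∈ D, d.symm ∉ D := by
      intro d hd hds
      have hne : (Sum.inr d : V ⊕ G.Dart) ≠ Sum.inr d.symm := by
        simpa using (SimpleGraph.Dart.symm_ne d).symm
      exact hT hd hds hne ((adj_inr_inr d d.symm).mpr rfl)
    have hD1 : ∀ d ∈ D, d.toProd.1 ∉ A := by
      intro d hd ha
      exact hT (show Sum.inl d.toProd.1 ∈ T from ha) hd (by simp)
        ((adj_inl_inr _ d).mpr rfl)
    have hinj : Set.InjOn SimpleGraph.Dart.edge D := by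
      intro d hd d' hd' he
      rcases (SimpleGraph.dart_edge_eq_iff d d').mp he with h | h
      · exact h
      · exact absurd (h ▸ hd) (hDsymm d' hd')
    have himg : SimpleGraph.Dart.edge '' D ⊆ G.edgeSet \ EA := by
      rintro _ ⟨d, hd, rfl⟩
      refine ⟨d.edge_mem, fun hmem => hD1 d hd (hmem.2 d.toProd.1 ?_)⟩
      show d.toProd.1 ∈ s(d.toProd.1, d.toProd.2)
      rw [← Prod.mk.eta (p := d.toProd)]
      exact Sym2.mem_mk_left _ _
    have hEAsub : EA ⊆ G.edgeSet := fun e he => he.1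
    have hEAle : EA.ncard ≤ G.edgeFinset.card := by
      rw [← hE]; exact Set.ncard_le_ncard hEAsub (Set.toFinite _)
    have hDcard : D.ncard ≤ G.edgeFinset.card - EA.ncard := by
      calc D.ncard = (SimpleGraph.Dart.edge '' D).ncard :=
            (Set.ncard_image_of_injOn hinj).symm
        _ ≤ (G.edgeSet \ EA).ncard := Set.ncard_le_ncard himg (Set.toFinite _)
        _ = G.edgeSet.ncard - EA.ncard := Set.ncard_diff hEAsub (Set.toFinite _)
        _ = G.edgeFinset.card - EA.ncard := by rw [hE]
    omega
end

section
/- There exists a fragile finite simple graph with chromatic number exactly 4; hence the bound 4 in the statement 'every fragile graph is 4-colourable' is best possible. -/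
namespace Frag

def elist : List (Fin 7 × Fin 7) :=
  [(0,1),(0,2),(1,2),(1,3),(2,3),(0,4),(0,5),(4,5),(4,6),(5,6),(3,6)]

def G : SimpleGraph (Fin 7) where
  Adj i j := (i,j) ∈ elist ∨ (j,i) ∈ elist
  symm := by constructor; intro i j h; exact h.symm
  loopless := by constructor; intro i; fin_cases i <;> decide

instance : DecidableRel G.Adj := fun i j => by
  unfold G; exact inferInstanceAs (Decidable (_ ∨ _))

/-- In a graph with no small cutsets and at least 4 vertices, every vertex has an
isolated-vertex obstruction: a vertex whose neighbourhood is small gives a disconnection. -/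
lemma no_iso {α : Type*} {Γ : SimpleGraph α} {a b : α} (h : Γ.Reachable a b) (hne : a ≠ b) :
    ∃ c, Γ.Adj a c := by
  obtain ⟨p⟩ := h
  cases p with
  | nil => exact absurd rfl hne
  | cons h p => exact ⟨_, h⟩

lemma mindeg (H : G.Subgraph) (hcard : 3 + 1 ≤ Nat.card ↥H.verts)
    (hconn : ∀ S : Set ↥H.verts, S.ncard ≤ 2 → (H.coe.induce Sᶜ).Connected)
    {v : Fin 7} (hv : v ∈ H.verts) : 3 ≤ (H.neighborSet v).ncard := by
  by_contra hlt
  push_neg at hlt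
  set S : Set ↥H.verts := {u | H.Adj v ↑u} with hSdef
  have himg : Subtype.val '' S = H.neighborSet v := by
    ext u
    simp only [Set.mem_image, hSdef, Set.mem_setOf_eq, SimpleGraph.Subgraph.mem_neighborSet]
    constructor
    · rintro ⟨w, hw, rfl⟩; exact hw
    · intro h; exact ⟨⟨u, H.edge_vert h.symm⟩, h, rfl⟩
  have hScard : S.ncard ≤ 2 := by
    have : S.ncard = (H.neighborSet v).ncard := by
      rw [← himg, Set.ncard_image_of_injective _ Subtype.val_injective]
    omega
  have hcs := hconn S hScard
  have hvS : (⟨v, hv⟩ : ↥H.verts) ∈ Sᶜ := by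
    intro h
    exact G.loopless.irrefl v (H.adj_sub h)
  -- find another vertex outside S ∪ {v}
  have hne : ((S ∪ {(⟨v, hv⟩ : ↥H.verts)})ᶜ).Nonempty := by
    by_contra hemp
    rw [Set.not_nonempty_iff_eq_empty, Set.compl_empty_iff] at hemp
    have h1 : (S ∪ {(⟨v, hv⟩ : ↥H.verts)}).ncard ≤ 3 := by
      have := Set.ncard_union_le S {(⟨v, hv⟩ : ↥H.verts)}
      simp only [Set.ncard_singleton] at this
      omega
    rw [hemp, Set.ncard_univ] at h1
    omega
  obtain ⟨w, hw⟩ := hne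
  simp only [Set.mem_compl_iff, Set.mem_union, Set.mem_singleton_iff, not_or] at hw
  have hwS : w ∈ Sᶜ := hw.1
  have hreach := hcs.preconnected ⟨⟨v, hv⟩, hvS⟩ ⟨w, hwS⟩
  have hne2 : (⟨⟨v, hv⟩, hvS⟩ : ↥(Sᶜ)) ≠ ⟨w, hwS⟩ := by
    intro h
    exact hw.2 (congrArg Subtype.val h).symm
  obtain ⟨c, hc⟩ := no_iso hreach hne2
  have hadj : H.Adj v ↑(↑c : ↥H.verts) := hc
  exact c.2 hadj

lemma force (H : G.Subgraph) (hcard : 3 + 1 ≤ Nat.card ↥H.verts)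
    (hconn : ∀ S : Set ↥H.verts, S.ncard ≤ 2 → (H.coe.induce Sᶜ).Connected)
    {v a b c : Fin 7} (hnbr : ∀ u, G.Adj v u ↔ (u = a ∨ u = b ∨ u = c))
    (habc : ({a, b, c} : Finset (Fin 7)).card = 3)
    (hv : v ∈ H.verts) : a ∈ H.verts ∧ b ∈ H.verts ∧ c ∈ H.verts := by
  have hsub : H.neighborSet v ⊆ (({a, b, c} : Finset (Fin 7)) : Set (Fin 7)) := by
    intro u hu
    have := (hnbr u).mp (H.adj_sub hu)
    simp only [Finset.coe_insert, Set.mem_insert_iff, Finset.coe_singleton,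
      Set.mem_singleton_iff]
    exact this
  have heq : H.neighborSet v = (({a, b, c} : Finset (Fin 7)) : Set (Fin 7)) := by
    apply Set.eq_of_subset_of_ncard_le hsub _ (Set.toFinite _)
    rw [Set.ncard_coe_finset, habc]
    exact mindeg H hcard hconn hv
  have hmem : ∀ u ∈ (({a, b, c} : Finset (Fin 7)) : Set (Fin 7)), u ∈ H.verts := by
    intro u hu
    rw [← heq] at hu
    exact H.edge_vert hu.symm
  refine ⟨hmem a ?_, hmem b ?_, hmem c ?_⟩ <;> simp

theorem G_fragile : G.Fragile := by
  intro H hK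
  obtain ⟨hcard, hconn'⟩ := hK
  have hconn : ∀ S : Set ↥H.verts, S.ncard ≤ 2 → (H.coe.induce Sᶜ).Connected := by
    intro S hS; exact hconn' S (by norm_num; omega)
  -- forcing lemmas for each degree-3 vertex
  have f1 : (1 : Fin 7) ∈ H.verts → (0 : Fin 7) ∈ H.verts ∧ (2 : Fin 7) ∈ H.verts ∧ (3 : Fin 7) ∈ H.verts :=
    force H hcard hconn (by decide) (by decide)
  have f3 : (3 : Fin 7) ∈ H.verts → (1 : Fin 7) ∈ H.verts ∧ (2 : Fin 7) ∈ H.verts ∧ (6 : Fin 7) ∈ H.verts :=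
    force H hcard hconn (by decide) (by decide)
  have f4 : (4 : Fin 7) ∈ H.verts → (0 : Fin 7) ∈ H.verts ∧ (5 : Fin 7) ∈ H.verts ∧ (6 : Fin 7) ∈ H.verts :=
    force H hcard hconn (by decide) (by decide)
  have f2 : (2 : Fin 7) ∈ H.verts → (0 : Fin 7) ∈ H.verts ∧ (1 : Fin 7) ∈ H.verts ∧ (3 : Fin 7) ∈ H.verts :=
    force H hcard hconn (by decide) (by decide)
  have f5 : (5 : Fin 7) ∈ H.verts → (0 : Fin 7) ∈ H.verts ∧ (4 : Fin 7) ∈ H.verts ∧ (6 : Fin 7) ∈ H.verts :=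
    force H hcard hconn (by decide) (by decide)
  have f6 : (6 : Fin 7) ∈ H.verts → (3 : Fin 7) ∈ H.verts ∧ (4 : Fin 7) ∈ H.verts ∧ (5 : Fin 7) ∈ H.verts :=
    force H hcard hconn (by decide) (by decide)
  -- H.verts is nonempty
  have hvne : H.verts.Nonempty := by
    apply Set.nonempty_of_ncard_ne_zero
    rw [← Nat.card_coe_set_eq]
    omega
  obtain ⟨v, hv⟩ := hvne
  -- show 3 ∈ H.verts
  have h3 : (3 : Fin 7) ∈ H.verts := by
    fin_cases v
    · -- v = 0 : it has some neighbour, in {1,2,4,5}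
      have hd : 3 ≤ (H.neighborSet (0 : Fin 7)).ncard := mindeg H hcard hconn hv
      have hne : (H.neighborSet 0).Nonempty := Set.nonempty_of_ncard_ne_zero (by omega)
      obtain ⟨u, hu⟩ := hne
      have hGadj : G.Adj 0 u := H.adj_sub hu
      have humem : u ∈ H.verts := H.edge_vert hu.symm
      have : u = 1 ∨ u = 2 ∨ u = 4 ∨ u = 5 := by revert hGadj; fin_cases u <;> decide
      rcases this with rfl | rfl | rfl | rfl
      · exact (f1 humem).2.2
      · exact (f2 humem).2.2
      · exact (f6 (f4 humem).2.2).1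
      · exact (f6 (f5 humem).2.2).1
    · exact (f1 hv).2.2
    · exact (f2 hv).2.2
    · exact hv
    · exact (f6 (f4 hv).2.2).1
    · exact (f6 (f5 hv).2.2).1
    · exact (f6 hv).1
  have h1 : (1 : Fin 7) ∈ H.verts := (f3 h3).1
  have h6 : (6 : Fin 7) ∈ H.verts := (f3 h3).2.2
  have h0 : (0 : Fin 7) ∈ H.verts := (f1 h1).1
  have h4 : (4 : Fin 7) ∈ H.verts := (f6 h6).2.1
  -- now cut with S = {0, 3}
  set S : Set ↥H.verts := {⟨0, h0⟩, ⟨3, h3⟩} with hSdef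
  have hScard : S.ncard ≤ 2 := by
    rw [hSdef]
    have h := Set.ncard_insert_le (⟨0, h0⟩ : ↥H.verts) {⟨3, h3⟩}
    simp only [Set.ncard_singleton] at h
    omega
  have hcs := hconn S hScard
  have h1S : (⟨1, h1⟩ : ↥H.verts) ∈ Sᶜ := by
    simp only [hSdef, Set.mem_compl_iff, Set.mem_insert_iff, Set.mem_singleton_iff, not_or,
      Subtype.mk.injEq]
    exact ⟨by decide, by decide⟩
  have h4S : (⟨4, h4⟩ : ↥H.verts) ∈ Sᶜ := by
    simp only [hSdef, Set.mem_compl_iff, Set.mem_insert_iff, Set.mem_singleton_iff, not_or,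
      Subtype.mk.injEq]
    exact ⟨by decide, by decide⟩
  have hreach := hcs.preconnected ⟨⟨1, h1⟩, h1S⟩ ⟨⟨4, h4⟩, h4S⟩
  obtain ⟨p⟩ := hreach
  -- invariant: the underlying Fin 7 value is in {1, 2}
  have key : ∀ (x y : ↥(Sᶜ)) (q : (H.coe.induce Sᶜ).Walk x y),
      ((x : ↥H.verts) : Fin 7) = 1 ∨ ((x : ↥H.verts) : Fin 7) = 2 →
      ((y : ↥H.verts) : Fin 7) = 1 ∨ ((y : ↥H.verts) : Fin 7) = 2 := by
    intro x y q
    induction q with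
    | nil => exact id
    | @cons x' y' z' hadj q' ih =>
      intro hx
      apply ih
      have hGadj : G.Adj ((x' : ↥H.verts) : Fin 7) ((y' : ↥H.verts) : Fin 7) :=
        H.adj_sub hadj
      have hx0 : ((x' : ↥H.verts) : Fin 7) ≠ 0 := by
        intro h
        exact x'.2 (by left; exact Subtype.ext h)
      have hx3 : ((x' : ↥H.verts) : Fin 7) ≠ 3 := by
        intro h
        exact x'.2 (by right; exact Subtype.ext h)
      have hy0 : ((y' : ↥H.verts) : Fin 7) ≠ 0 := by
        intro h
        exact y'.2 (by left; exact Subtype.ext h)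
      have hy3 : ((y' : ↥H.verts) : Fin 7) ≠ 3 := by
        intro h
        exact y'.2 (by right; exact Subtype.ext h)
      have step : ∀ a b : Fin 7, G.Adj a b → a ≠ 0 → a ≠ 3 → b ≠ 0 → b ≠ 3 →
          (a = 1 ∨ a = 2) → (b = 1 ∨ b = 2) := by decide
      exact step _ _ hGadj hx0 hx3 hy0 hy3 hx
  have := key _ _ p (by left; rfl)
  simp at this
set_option maxRecDepth 4000 in
theorem G_colorable : G.Colorable 4 := by
  exact ⟨⟨fun v => ![0, 1, 2, 3, 1, 2, 0] v, by decide⟩⟩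

theorem G_not_colorable : ¬ G.Colorable 3 := by
  rintro ⟨C⟩
  have key : ∀ a b c d : Fin 3, b ≠ c → a ≠ b → a ≠ c → d ≠ b → d ≠ c → d = a := by
    have : ∀ a b c d : Fin 3, b = c ∨ a = b ∨ a = c ∨ d = b ∨ d = c ∨ d = a := by decide
    intro a b c d h1 h2 h3 h4 h5
    rcases this a b c d with h | h | h | h | h | h <;> first | exact h | (exact absurd h (by assumption))
  have h3 : C 3 = C 0 :=
    key (C 0) (C 1) (C 2) (C 3) (C.valid (by decide)) (C.valid (by decide))
      (C.valid (by decide)) (Ne.symm (C.valid (by decide))) (Ne.symm (C.valid (by decide)))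
  have h6 : C 6 = C 0 :=
    key (C 0) (C 4) (C 5) (C 6) (C.valid (by decide)) (C.valid (by decide))
      (C.valid (by decide)) (Ne.symm (C.valid (by decide))) (Ne.symm (C.valid (by decide)))
  exact C.valid (show G.Adj 3 6 by decide) (h3.trans h6.symm)

end Frag

/-- There is a fragile graph with chromatic number exactly 4. -/
theorem statement16 :
    ∃ (V : Type) (_ : Fintype V) (G : SimpleGraph V),
      G.Fragile ∧ G.chromaticNumber = 4 := by
  refine ⟨Fin 7, inferInstance, Frag.G, Frag.G_fragile, ?_⟩
  apply le_antisymm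
  · have := SimpleGraph.chromaticNumber_le_iff_colorable.mpr Frag.G_colorable
    exact_mod_cast this
  · by_contra h
    push_neg at h
    have h3 : Frag.G.chromaticNumber ≤ 3 := by
      have := Order.le_of_lt_add_one (by exact_mod_cast h : Frag.G.chromaticNumber < 3 + 1)
      exact this
    have : Frag.G.Colorable 3 := by
      have := SimpleGraph.chromaticNumber_le_iff_colorable.mp (by exact_mod_cast h3)
      exact this
    exact Frag.G_not_colorable this
end

section
/- There exists a fragile finite simple graph that contains no cycle of length 4 and has chromatic number exactly 4. -/
/- ### The graph: two split Moser spindles attached to a path -/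

def nbrs : Fin 16 → List (Fin 16)
  | 0 => [1, 4, 6, 10, 12]
  | 1 => [0, 2, 3]
  | 2 => [1, 3, 5, 7]
  | 3 => [1, 2, 11, 13]
  | 4 => [0, 5, 8]
  | 5 => [2, 4, 8]
  | 6 => [0, 7, 9]
  | 7 => [2, 6, 9]
  | 8 => [4, 5, 9]
  | 9 => [6, 7, 8]
  | 10 => [0, 11, 14]
  | 11 => [3, 10, 14]
  | 12 => [0, 13, 15]
  | 13 => [3, 12, 15]
  | 14 => [10, 11, 15]
  | _ => [12, 13, 14]

theorem nbrs_symm : ∀ x y : Fin 16, y ∈ nbrs x → x ∈ nbrs y := by decide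
theorem nbrs_irrefl : ∀ x : Fin 16, ¬ x ∈ nbrs x := by decide

def myG : SimpleGraph (Fin 16) where
  Adj := fun x y => y ∈ nbrs x
  symm := ⟨fun x y h => nbrs_symm x y h⟩
  loopless := ⟨fun x h => nbrs_irrefl x h⟩

instance : DecidableRel myG.Adj := fun x y => inferInstanceAs (Decidable (y ∈ nbrs x))

/- ### General lemmas about 3-connected subgraphs -/

section General
variable {V : Type} {G : SimpleGraph V} {H : G.Subgraph}

lemma reach_confine {A : Set V} (hcl : ∀ ⦃x y⦄, x ∈ A → G.Adj x y → y ∈ A) :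
    ∀ {u v : V}, (w : G.Walk u v) → u ∈ A → v ∈ A := by
  intro u v w
  induction w with
  | nil => exact id
  | cons h p ih => exact fun hu => ih (hcl hu h)

lemma card4_exists {W : Set V} (h4 : 4 ≤ Nat.card ↥W) (a b c : V) :
    ∃ w, w ∈ W ∧ w ≠ a ∧ w ≠ b ∧ w ≠ c := by
  by_contra hcon
  push_neg at hcon
  have hsub : W ⊆ {a, b, c} := by
    intro w hw
    by_contra hn
    simp only [Set.mem_insert_iff, Set.mem_singleton_iff] at hn
    push_neg at hn
    exact hn.2.2 (hcon w hw hn.1 hn.2.1)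
  have h1 : Nat.card ↥W = W.ncard := Nat.card_coe_set_eq W
  have h2 : W.ncard ≤ ({a, b, c} : Set V).ncard :=
    Set.ncard_le_ncard hsub ((Set.finite_singleton c).insert b |>.insert a)
  have h3 : ({a, b, c} : Set V).ncard ≤ 3 := by
    have e1 := Set.ncard_insert_le a ({b, c} : Set V)
    have e2 := Set.ncard_insert_le b ({c} : Set V)
    have e3 := Set.ncard_singleton c
    omega
  omega

/-- Deleting the (at most two) vertices `a`, `b` from a 3-connected subgraph `H` cannot
disconnect it; so if `P` describes a region around a vertex `u0 ∈ H` whose only exits are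
`a` and `b`, and `H` has a vertex `w0` outside the region (other than `a`, `b`),
we get a contradiction. -/
lemma sep_step (h3 : H.coe.IsKConnected 3) (P : V → Prop) (a b : V)
    (hcl : ∀ u w, P u → G.Adj u w → w ∈ H.verts → w ≠ a → w ≠ b → P w)
    {u0 w0 : V} (hu0 : u0 ∈ H.verts) (hPu0 : P u0) (hu0a : u0 ≠ a) (hu0b : u0 ≠ b)
    (hw0 : w0 ∈ H.verts) (hPw0 : ¬ P w0) (hw0a : w0 ≠ a) (hw0b : w0 ≠ b) : False := by
  obtain ⟨hcard, hconn⟩ := h3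
  set S : Set ↥H.verts := {x | (x : V) = a ∨ (x : V) = b} with hS
  have hScard : S.ncard ≤ 3 - 1 := by
    have himg : (Subtype.val '' S) ⊆ {a, b} := by
      rintro x ⟨y, hy, rfl⟩; exact hy
    have h1 : S.ncard = (Subtype.val '' S).ncard :=
      (Set.ncard_image_of_injective S Subtype.val_injective).symm
    have h2 : (Subtype.val '' S).ncard ≤ ({a, b} : Set V).ncard :=
      Set.ncard_le_ncard himg ((Set.finite_singleton b).insert a)
    have h3' : ({a, b} : Set V).ncard ≤ 2 :=
      le_trans (Set.ncard_insert_le _ _) (by simp)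
    omega
  have hconn' := hconn S hScard
  have hx1 : (⟨u0, hu0⟩ : ↥H.verts) ∈ Sᶜ := by
    intro hc
    rcases hc with h | h
    exacts [hu0a h, hu0b h]
  have hx2 : (⟨w0, hw0⟩ : ↥H.verts) ∈ Sᶜ := by
    intro hc
    rcases hc with h | h
    exacts [hw0a h, hw0b h]
  obtain ⟨wk⟩ := hconn'.preconnected ⟨⟨u0, hu0⟩, hx1⟩ ⟨⟨w0, hw0⟩, hx2⟩
  have hcl' : ∀ ⦃x y : ↥(Sᶜ)⦄, x ∈ {z : ↥(Sᶜ) | P ((z : ↥H.verts) : V)} →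
      (H.coe.induce Sᶜ).Adj x y → y ∈ {z : ↥(Sᶜ) | P ((z : ↥H.verts) : V)} := by
    intro x y hx hadj
    have hGadj : G.Adj ((x : ↥H.verts) : V) ((y : ↥H.verts) : V) := H.adj_sub hadj
    have hyW : ((y : ↥H.verts) : V) ∈ H.verts := (y : ↥H.verts).2
    have hyS := y.2
    have hya : ((y : ↥H.verts) : V) ≠ a := fun h => hyS (Or.inl h)
    have hyb : ((y : ↥H.verts) : V) ≠ b := fun h => hyS (Or.inr h)
    exact hcl _ _ hx hGadj hyW hya hyb
  exact hPw0 (reach_confine hcl' wk hPu0)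

end General

/- ### Fragility -/

theorem closure_cut : ∀ u w : Fin 16, ¬((4 ≤ u.val ∧ u.val ≤ 9) ∧ myG.Adj u w ∧
    w ≠ 0 ∧ w ≠ 2 ∧ ¬(4 ≤ w.val ∧ w.val ≤ 9)) := by decide

theorem myG_fragile : myG.Fragile := by
  intro H h3
  have hcard : 4 ≤ Nat.card ↥H.verts := h3.1
  -- elimination primitive
  have elim2 : ∀ v a b : Fin 16, v ∈ H.verts → v ≠ a → v ≠ b →
      (∀ u, myG.Adj v u → u ∈ H.verts → u = a ∨ u = b) → False := by
    intro v a b hv hva hvb hnb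
    obtain ⟨w, hwW, hwv, hwa, hwb⟩ := card4_exists hcard v a b
    refine sep_step h3 (· = v) a b ?_ hv rfl hva hvb hwW hwv hwa hwb
    intro u w' hu hadj hwW' hwa' hwb'
    subst hu
    rcases hnb w' hadj hwW' with h | h
    exacts [absurd h hwa', absurd h hwb']
  -- membership propagation primitive: if v ∈ H.verts and N(v) = {n1,n2,n3}, then n1 ∈ H.verts
  have mem3 : ∀ v n1 n2 n3 : Fin 16, (∀ u, myG.Adj v u → u = n1 ∨ u = n2 ∨ u = n3) →
      v ≠ n2 → v ≠ n3 → v ∈ H.verts → n1 ∈ H.verts := by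
    intro v n1 n2 n3 hnb hv2 hv3 hv
    by_contra hn1
    refine elim2 v n2 n3 hv hv2 hv3 ?_
    intro u hadj huW
    rcases hnb u hadj with rfl | h | h
    exacts [absurd huW hn1, Or.inl h, Or.inr h]
  set W := H.verts with hW
  -- propagation lemmas toward vertex 8 (p1)
  have g2 : (2 : Fin 16) ∈ W → (8 : Fin 16) ∈ W := by
    intro h2
    by_cases h5 : (5 : Fin 16) ∈ W
    · exact mem3 5 8 2 4 (by decide) (by decide) (by decide) h5
    by_cases h7 : (7 : Fin 16) ∈ W
    · have h9 := mem3 7 9 2 6 (by decide) (by decide) (by decide) h7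
      exact mem3 9 8 6 7 (by decide) (by decide) (by decide) h9
    exact absurd (elim2 2 1 3 h2 (by decide) (by decide) (by
      intro u hadj huW
      rcases (by decide : ∀ z : Fin 16, z = 1 ∨ z = 3 ∨ z = 5 ∨ z = 7 ∨ ¬ myG.Adj 2 z) u with h|h|h|h|h
      exacts [Or.inl h, Or.inr h, absurd (h ▸ huW) h5, absurd (h ▸ huW) h7, absurd hadj h])) id
  have g1 : (1 : Fin 16) ∈ W → (8 : Fin 16) ∈ W := fun h1 =>
    g2 (mem3 1 2 0 3 (by decide) (by decide) (by decide) h1)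
  have g0 : (0 : Fin 16) ∈ W → (8 : Fin 16) ∈ W := by
    intro h0
    by_cases h4 : (4 : Fin 16) ∈ W
    · exact mem3 4 8 0 5 (by decide) (by decide) (by decide) h4
    by_cases h6 : (6 : Fin 16) ∈ W
    · have h9 := mem3 6 9 0 7 (by decide) (by decide) (by decide) h6
      exact mem3 9 8 6 7 (by decide) (by decide) (by decide) h9
    by_cases h1 : (1 : Fin 16) ∈ W
    · exact g1 h1
    exact absurd (elim2 0 10 12 h0 (by decide) (by decide) (by
      intro u hadj huW
      rcases (by decide : ∀ z : Fin 16, z = 10 ∨ z = 12 ∨ z = 1 ∨ z = 4 ∨ z = 6 ∨ ¬ myG.Adj 0 z) u with h|h|h|h|h|h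
      exacts [Or.inl h, Or.inr h, absurd (h ▸ huW) h1, absurd (h ▸ huW) h4,
        absurd (h ▸ huW) h6, absurd hadj h])) id
  have g3 : (3 : Fin 16) ∈ W → (8 : Fin 16) ∈ W := by
    intro h3'
    by_cases h1 : (1 : Fin 16) ∈ W
    · exact g1 h1
    by_cases h2 : (2 : Fin 16) ∈ W
    · exact g2 h2
    exact absurd (elim2 3 11 13 h3' (by decide) (by decide) (by
      intro u hadj huW
      rcases (by decide : ∀ z : Fin 16, z = 11 ∨ z = 13 ∨ z = 1 ∨ z = 2 ∨ ¬ myG.Adj 3 z) u with h|h|h|h|h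
      exacts [Or.inl h, Or.inr h, absurd (h ▸ huW) h1, absurd (h ▸ huW) h2, absurd hadj h])) id
  -- propagation lemmas toward vertex 3 ('4')
  have k1 : (1 : Fin 16) ∈ W → (3 : Fin 16) ∈ W := fun h1 =>
    mem3 1 3 0 2 (by decide) (by decide) (by decide) h1
  have k2 : (2 : Fin 16) ∈ W → (3 : Fin 16) ∈ W := by
    intro h2
    by_cases h3' : (3 : Fin 16) ∈ W
    · exact h3'
    by_cases h1 : (1 : Fin 16) ∈ W
    · exact k1 h1
    exact absurd (elim2 2 5 7 h2 (by decide) (by decide) (by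
      intro u hadj huW
      rcases (by decide : ∀ z : Fin 16, z = 5 ∨ z = 7 ∨ z = 1 ∨ z = 3 ∨ ¬ myG.Adj 2 z) u with h|h|h|h|h
      exacts [Or.inl h, Or.inr h, absurd (h ▸ huW) h1, absurd (h ▸ huW) h3', absurd hadj h])) id
  have k0 : (0 : Fin 16) ∈ W → (3 : Fin 16) ∈ W := by
    intro h0
    by_cases h10 : (10 : Fin 16) ∈ W
    · have h11 := mem3 10 11 0 14 (by decide) (by decide) (by decide) h10
      exact mem3 11 3 10 14 (by decide) (by decide) (by decide) h11
    by_cases h12 : (12 : Fin 16) ∈ W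
    · have h13 := mem3 12 13 0 15 (by decide) (by decide) (by decide) h12
      exact mem3 13 3 12 15 (by decide) (by decide) (by decide) h13
    by_cases h1 : (1 : Fin 16) ∈ W
    · exact k1 h1
    exact absurd (elim2 0 4 6 h0 (by decide) (by decide) (by
      intro u hadj huW
      rcases (by decide : ∀ z : Fin 16, z = 4 ∨ z = 6 ∨ z = 1 ∨ z = 10 ∨ z = 12 ∨ ¬ myG.Adj 0 z) u with h|h|h|h|h|h
      exacts [Or.inl h, Or.inr h, absurd (h ▸ huW) h1, absurd (h ▸ huW) h10,
        absurd (h ▸ huW) h12, absurd hadj h])) id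
  -- get a seed vertex
  obtain ⟨v0, hv0, -⟩ := card4_exists hcard 0 0 0
  -- derive 8 ∈ W and 3 ∈ W
  have main : (8 : Fin 16) ∈ W ∧ (3 : Fin 16) ∈ W := by
    have m4 : ∀ x, x = (4:Fin 16) → x ∈ W → (8:Fin 16) ∈ W ∧ (3:Fin 16) ∈ W := by
      intro x hx h
      subst hx
      have h8 := mem3 4 8 0 5 (by decide) (by decide) (by decide) h
      have h0 := mem3 4 0 5 8 (by decide) (by decide) (by decide) h
      exact ⟨h8, k0 h0⟩
    rcases (by decide : ∀ z : Fin 16, z = 0 ∨ z = 1 ∨ z = 2 ∨ z = 3 ∨ z = 4 ∨ z = 5 ∨ z = 6 ∨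
        z = 7 ∨ z = 8 ∨ z = 9 ∨ z = 10 ∨ z = 11 ∨ z = 12 ∨ z = 13 ∨ z = 14 ∨
        z = 15) v0 with h|h|h|h|h|h|h|h|h|h|h|h|h|h|h|h <;> subst h
    · exact ⟨g0 hv0, k0 hv0⟩
    · exact ⟨g1 hv0, k1 hv0⟩
    · exact ⟨g2 hv0, k2 hv0⟩
    · exact ⟨g3 hv0, hv0⟩
    · exact m4 4 rfl hv0
    · -- 5
      have h2 := mem3 5 2 4 8 (by decide) (by decide) (by decide) hv0
      exact ⟨g2 h2, k2 h2⟩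
    · -- 6
      have h0 := mem3 6 0 7 9 (by decide) (by decide) (by decide) hv0
      exact ⟨g0 h0, k0 h0⟩
    · -- 7
      have h2 := mem3 7 2 6 9 (by decide) (by decide) (by decide) hv0
      exact ⟨g2 h2, k2 h2⟩
    · -- 8
      have ha := mem3 8 4 5 9 (by decide) (by decide) (by decide) hv0
      exact m4 4 rfl ha
    · -- 9
      have h6 := mem3 9 6 7 8 (by decide) (by decide) (by decide) hv0
      have h0 := mem3 6 0 7 9 (by decide) (by decide) (by decide) h6
      exact ⟨g0 h0, k0 h0⟩
    · -- 10
      have h0 := mem3 10 0 11 14 (by decide) (by decide) (by decide) hv0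
      exact ⟨g0 h0, k0 h0⟩
    · -- 11
      have h3' := mem3 11 3 10 14 (by decide) (by decide) (by decide) hv0
      exact ⟨g3 h3', h3'⟩
    · -- 12
      have h0 := mem3 12 0 13 15 (by decide) (by decide) (by decide) hv0
      exact ⟨g0 h0, k0 h0⟩
    · -- 13
      have h3' := mem3 13 3 12 15 (by decide) (by decide) (by decide) hv0
      exact ⟨g3 h3', h3'⟩
    · -- 14
      have h10 := mem3 14 10 11 15 (by decide) (by decide) (by decide) hv0
      have h0 := mem3 10 0 11 14 (by decide) (by decide) (by decide) h10
      exact ⟨g0 h0, k0 h0⟩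
    · -- 15
      have h12 := mem3 15 12 13 14 (by decide) (by decide) (by decide) hv0
      have h0 := mem3 12 0 13 15 (by decide) (by decide) (by decide) h12
      exact ⟨g0 h0, k0 h0⟩
  obtain ⟨h8W, h3W⟩ := main
  -- final: {0,2} is a 2-cut separating the region {4..9} (containing 8) from vertex 3
  refine sep_step h3 (fun x : Fin 16 => 4 ≤ x.val ∧ x.val ≤ 9) 0 2 ?_ h8W (by decide)
    (by decide) (by decide) h3W (by decide) (by decide) (by decide)
  intro u w hu hadj hwW hwa hwb
  by_contra hP
  exact closure_cut u w ⟨hu, hadj, hwa, hwb, hP⟩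

/- ### No 4-cycles -/

theorem keyC4' : ∀ a : Fin 16, ∀ b ∈ nbrs a, ∀ c ∈ nbrs b, ∀ d ∈ nbrs c,
    ¬(a ∈ nbrs d ∧ a ≠ c ∧ b ≠ d) := by decide

theorem myG_noC4 : ∀ (v : Fin 16) (c : myG.Walk v v), c.IsCycle → c.length ≠ 4 := by
  intro v c hc hlen
  cases c with
  | nil => simp at hlen
  | cons h1 p =>
    cases p with
    | nil => simp at hlen
    | cons h2 p =>
      cases p with
      | nil => simp at hlen
      | cons h3 p =>
        cases p with
        | nil => simp at hlen
        | cons h4 p =>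
          cases p with
          | cons h5 p => simp [SimpleGraph.Walk.length_cons] at hlen
          | nil =>
            rename_i x1 x2 x3
            have hnd := hc.support_nodup
            simp [SimpleGraph.Walk.support_cons, List.nodup_cons] at hnd
            -- hnd gives distinctness facts
            exact keyC4' v x1 h1 x2 h2 x3 h3
              ⟨h4, fun h => hnd.2.1.2 h.symm, fun h => hnd.1.2.1 h⟩

/- ### Chromatic number -/

def myCol : Fin 16 → Fin 4
  | 0 => 0 | 1 => 1 | 2 => 0 | 3 => 2 | 4 => 1 | 5 => 2 | 6 => 1 | 7 => 2
  | 8 => 0 | 9 => 3 | 10 => 1 | 11 => 0 | 12 => 1 | 13 => 0 | 14 => 2 | _ => 3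

theorem colValid : ∀ a b : Fin 16, myG.Adj a b → myCol a ≠ myCol b := by decide

theorem myG_col4 : myG.Colorable 4 := ⟨SimpleGraph.Coloring.mk myCol (colValid _ _)⟩

set_option synthInstance.maxSize 3000 in
theorem moser_force : ∀ x1 x2 x3 x4 x5 x6 x7 x8 : Fin 3, ¬(x3 ≠ x1 ∧ x4 ≠ x2 ∧ x3 ≠ x4 ∧
    x7 ≠ x3 ∧ x7 ≠ x4 ∧ x5 ≠ x1 ∧ x6 ≠ x2 ∧ x5 ≠ x6 ∧ x8 ≠ x5 ∧ x8 ≠ x6 ∧ x7 ≠ x8 ∧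
    x1 = x2) := by decide

theorem fin3_clash : ∀ w x y z : Fin 3, ¬(w ≠ x ∧ w ≠ y ∧ w ≠ z ∧ x ≠ y ∧ x ≠ z ∧ y ≠ z) := by
  decide

theorem myG_not3col : ¬ myG.Colorable 3 := by
  rintro ⟨C⟩
  have hne : ∀ a b : Fin 16, myG.Adj a b → C a ≠ C b := fun a b h => C.valid h
  have h02 : C 0 ≠ C 2 := fun h => moser_force (C 0) (C 2) (C 4) (C 5) (C 6) (C 7) (C 8) (C 9)
    ⟨hne 4 0 (by decide), hne 5 2 (by decide), hne 4 5 (by decide), hne 8 4 (by decide),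
     hne 8 5 (by decide), hne 6 0 (by decide), hne 7 2 (by decide), hne 6 7 (by decide),
     hne 9 6 (by decide), hne 9 7 (by decide), hne 8 9 (by decide), h⟩
  have h03 : C 0 ≠ C 3 := fun h => moser_force (C 0) (C 3) (C 10) (C 11) (C 12) (C 13) (C 14)
    (C 15)
    ⟨hne 10 0 (by decide), hne 11 3 (by decide), hne 10 11 (by decide), hne 14 10 (by decide),
     hne 14 11 (by decide), hne 12 0 (by decide), hne 13 3 (by decide), hne 12 13 (by decide),
     hne 15 12 (by decide), hne 15 13 (by decide), hne 14 15 (by decide), h⟩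
  exact fin3_clash (C 1) (C 0) (C 2) (C 3)
    ⟨hne 1 0 (by decide), hne 1 2 (by decide), hne 1 3 (by decide), h02, h03,
     hne 2 3 (by decide)⟩

theorem myG_chrom : myG.chromaticNumber = 4 := by
  refine le_antisymm ?_ ?_
  · exact_mod_cast myG_col4.chromaticNumber_le
  · by_contra hlt
    push_neg at hlt
    have h3 : myG.chromaticNumber ≤ (3 : ℕ) := by
      have : ((3 : ℕ) : ℕ∞) + 1 = 4 := by norm_num
      exact Order.le_of_lt_add_one (this ▸ hlt)
    exact myG_not3col (SimpleGraph.chromaticNumber_le_iff_colorable.mp h3)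

/-- There is a fragile graph with no cycle of length 4 and chromatic number exactly 4. -/
theorem statement18 :
    ∃ (V : Type) (_ : Fintype V) (G : SimpleGraph V),
      G.Fragile ∧ (∀ (v : V) (c : G.Walk v v), c.IsCycle → c.length ≠ 4) ∧
        G.chromaticNumber = 4 := by
  exact ⟨Fin 16, inferInstance, myG, myG_fragile, myG_noC4, myG_chrom⟩
end
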